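/- arXiv:1710.09047 — 6 statements merged into one kernel-verified Lean document; each statement's English description precedes it below -/
import Mathlib

section
/- Let 0 < α < 1/L. Then for each s = 1,…,p the block gradient map g^s_{αf} : ℝⁿ → ℝⁿ defined by g^s_{αf}(x) = x − α U_s ∇_s f(x) is a diffeomorphism of ℝⁿ, i.e. a continuously differentiable bijection whose inverse is continuously differentiable. -/
open Matrix MeasureTheory Filter Topology

noncomputable section

/-- A map is a (C¹) diffeomorphism if it is continuously differentiable, bijective,
and its inverse is continuously differentiable. -/
def IsDiffeomorphism {E : Type*} [NormedAddCommGroup E] [NormedSpace ℝ E] (g : E → E) : Prop :=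
  ContDiff ℝ 1 g ∧ Function.Bijective g ∧ ContDiff ℝ 1 (Function.invFun g)

/-- Jacobian matrix of a self-map of a Euclidean space. -/
def jacobianMatrix {ι : Type*} [Fintype ι] [DecidableEq ι]
    (g : EuclideanSpace ℝ ι → EuclideanSpace ℝ ι) (x : EuclideanSpace ℝ ι) :
    Matrix ι ι ℝ :=
  Matrix.of fun i j => fderiv ℝ g x (EuclideanSpace.single j 1) i

/-- The Hessian matrix of `f` at `x` (Jacobian of the gradient). -/
def hessianMatrix {ι : Type*} [Fintype ι] [DecidableEq ι]
    (f : EuclideanSpace ℝ ι → ℝ) (x : EuclideanSpace ℝ ι) : Matrix ι ι ℝ :=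
  jacobianMatrix (gradient f) x

/-- `z` is an eigenvalue (over `ℂ`) of the real matrix `M`. -/
def IsEigenvalue {ι : Type*} [Fintype ι] (M : Matrix ι ι ℝ) (z : ℂ) : Prop :=
  ∃ v : ι → ℂ, v ≠ 0 ∧ (M.map Complex.ofReal).mulVec v = z • v

/-- A real matrix has a negative (real) eigenvalue. -/
def HasNegEigenvalue {ι : Type*} [Fintype ι] (M : Matrix ι ι ℝ) : Prop :=
  ∃ (c : ℝ) (v : ι → ℝ), c < 0 ∧ v ≠ 0 ∧ M.mulVec v = c • v

/-- Strict saddle point: critical point whose Hessian has a negative eigenvalue. -/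
def IsStrictSaddle {ι : Type*} [Fintype ι] [DecidableEq ι]
    (f : EuclideanSpace ℝ ι → ℝ) (x : EuclideanSpace ℝ ι) : Prop :=
  gradient f x = 0 ∧ HasNegEigenvalue (hessianMatrix f x)

/-- The block-gradient-descent step `g^s_{αf}(x) = x - α U_s ∇_s f(x)`. -/
def blockGradStep {n p : ℕ} (f : EuclideanSpace ℝ (Fin n) → ℝ) (α : ℝ)
    (blk : Fin n → Fin p) (s : Fin p) (x : EuclideanSpace ℝ (Fin n)) :
    EuclideanSpace ℝ (Fin n) :=
  (WithLp.equiv 2 (Fin n → ℝ)).symm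
    fun i => x i - if blk i = s then α * gradient f x i else 0

/-- The BCGD map `g_{αf} = g^p ∘ ⋯ ∘ g^1` (block 1 is applied first). -/
def bcgdMap {n p : ℕ} (f : EuclideanSpace ℝ (Fin n) → ℝ) (α : ℝ)
    (blk : Fin n → Fin p) (x : EuclideanSpace ℝ (Fin n)) : EuclideanSpace ℝ (Fin n) :=
  (List.finRange p).foldl (fun y s => blockGradStep f α blk s y) x

/-- The projection matrix `U_s U_sᵀ` onto the coordinates of block `s`. -/
def blockProj {n p : ℕ} (blk : Fin n → Fin p) (s : Fin p) : Matrix (Fin n) (Fin n) ℝ :=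
  Matrix.diagonal fun i => if blk i = s then 1 else 0

/-- Strictly block lower triangular part of a matrix. -/
def lowerBlockPart {n p : ℕ} (blk : Fin n → Fin p) (A : Matrix (Fin n) (Fin n) ℝ) :
    Matrix (Fin n) (Fin n) ℝ :=
  Matrix.of fun i j => if blk j < blk i then A i j else 0

/-- Strictly block upper triangular part of a matrix. -/
def upperBlockPart {n p : ℕ} (blk : Fin n → Fin p) (A : Matrix (Fin n) (Fin n) ℝ) :
    Matrix (Fin n) (Fin n) ℝ :=
  Matrix.of fun i j => if blk i < blk j then A i j else 0

/-- Spectral radius of a real matrix: the largest modulus of its complex eigenvalues. -/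
def specRad {ι : Type*} [Fintype ι] (M : Matrix ι ι ℝ) : ℝ :=
  sSup {r : ℝ | ∃ z : ℂ, IsEigenvalue M z ∧ r = ‖z‖}


/-- The coordinate projection onto a block, as a continuous linear map. -/
def projCLM {n p : ℕ} (blk : Fin n → Fin p) (s : Fin p) :
    EuclideanSpace ℝ (Fin n) →L[ℝ] EuclideanSpace ℝ (Fin n) :=
  LinearMap.toContinuousLinearMap
  { toFun := fun x => (WithLp.equiv 2 (Fin n → ℝ)).symm fun i => if blk i = s then x i else 0
    map_add' := by
      intro x y; ext i; by_cases h : blk i = s <;> simp [h]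
    map_smul' := by
      intro c x; ext i; by_cases h : blk i = s <;> simp [h] }

lemma projCLM_apply {n p : ℕ} (blk : Fin n → Fin p) (s : Fin p)
    (x : EuclideanSpace ℝ (Fin n)) (i : Fin n) :
    projCLM blk s x i = if blk i = s then x i else 0 := rfl

lemma norm_projCLM_apply_le {n p : ℕ} (blk : Fin n → Fin p) (s : Fin p)
    (x : EuclideanSpace ℝ (Fin n)) : ‖projCLM blk s x‖ ≤ ‖x‖ := by
  rw [EuclideanSpace.norm_eq, EuclideanSpace.norm_eq]
  apply Real.sqrt_le_sqrt
  apply Finset.sum_le_sum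
  intro i _
  rw [projCLM_apply]
  by_cases h : blk i = s <;> simp [h] <;> positivity

lemma blockGradStep_eq {n p : ℕ} (f : EuclideanSpace ℝ (Fin n) → ℝ) (α : ℝ)
    (blk : Fin n → Fin p) (s : Fin p) (x : EuclideanSpace ℝ (Fin n)) :
    blockGradStep f α blk s x = x - α • projCLM blk s (gradient f x) := by
  ext i
  simp only [blockGradStep, WithLp.equiv_symm_apply, PiLp.toLp_apply, PiLp.sub_apply, PiLp.smul_apply,
    projCLM_apply, smul_eq_mul, mul_ite, mul_zero]

/-- each block gradient map `g^s_{αf}` is a diffeomorphism of ℝⁿ. -/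
theorem blockGradStep_isDiffeomorphism
    {n p : ℕ} (hp : 0 < p) (blk : Fin n → Fin p)
    (hmono : Monotone blk) (hsurj : Function.Surjective blk)
    (f : EuclideanSpace ℝ (Fin n) → ℝ) (hf : ContDiff ℝ 2 f)
    (L : ℝ) (hL : 0 < L) (hlip : LipschitzWith (Real.toNNReal L) (gradient f))
    (α : ℝ) (hα : 0 < α) (hα' : α < 1 / L) :
    ∀ s : Fin p, IsDiffeomorphism (blockGradStep f α blk s) := by
  intro s
  set P : EuclideanSpace ℝ (Fin n) →L[ℝ] EuclideanSpace ℝ (Fin n) := projCLM blk s with hP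
  set g : EuclideanSpace ℝ (Fin n) → EuclideanSpace ℝ (Fin n) := blockGradStep f α blk s with hg
  have hgeq : ∀ x, g x = x - α • P (gradient f x) := blockGradStep_eq f α blk s
  have hfg : g = fun x => x - α • P (gradient f x) := funext hgeq
  -- the gradient is C¹
  have hgrad : ContDiff ℝ 1 (gradient f) := by
    have h1 : ContDiff ℝ 1 (fderiv ℝ f) := hf.fderiv_right (by norm_num)
    exact ((InnerProductSpace.toDual ℝ (EuclideanSpace ℝ (Fin n))).symm.contDiff).comp h1
  -- g is C¹
  have hgc : ContDiff ℝ 1 g := by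
    rw [hfg]
    exact contDiff_id.sub ((P.contDiff.comp hgrad).const_smul α)
  have hL' : ((Real.toNNReal L : NNReal) : ℝ) = L := Real.coe_toNNReal L hL.le
  have hαL : α * L < 1 := by
    have : α * L < (1 / L) * L := by
      apply mul_lt_mul_of_pos_right hα' hL
    rwa [one_div, inv_mul_cancel₀ hL.ne'] at this
  have hαL0 : 0 ≤ α * L := by positivity
  set c : NNReal := Real.toNNReal (α * L) with hc
  have hcr : (c : ℝ) = α * L := Real.coe_toNNReal _ hαL0
  set A0 : EuclideanSpace ℝ (Fin n) ≃L[ℝ] EuclideanSpace ℝ (Fin n) := ContinuousLinearEquiv.refl ℝ (EuclideanSpace ℝ (Fin n)) with hA0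
  -- g approximates the identity with constant c = αL < 1
  have happrox : ApproximatesLinearOn g (A0 : EuclideanSpace ℝ (Fin n) →L[ℝ] EuclideanSpace ℝ (Fin n)) Set.univ c := by
    intro x _ y _
    have h1 : g x - g y - (A0 : EuclideanSpace ℝ (Fin n) →L[ℝ] EuclideanSpace ℝ (Fin n)) (x - y)
        = -(α • P (gradient f x - gradient f y)) := by
      rw [hgeq, hgeq]
      simp only [hA0, ContinuousLinearEquiv.coe_refl, ContinuousLinearMap.coe_id', id_eq,
        map_sub, smul_sub]
      abel
    rw [h1, norm_neg, norm_smul, Real.norm_eq_abs, abs_of_pos hα]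
    have h2 : ‖P (gradient f x - gradient f y)‖ ≤ L * ‖x - y‖ := by
      refine le_trans (norm_projCLM_apply_le blk s _) ?_
      have := hlip.dist_le_mul x y
      rwa [hL', dist_eq_norm, dist_eq_norm] at this
    calc α * ‖P (gradient f x - gradient f y)‖ ≤ α * (L * ‖x - y‖) :=
          mul_le_mul_of_nonneg_left h2 hα.le
      _ = (c : ℝ) * ‖x - y‖ := by rw [hcr]; ring
  have hcN : Subsingleton (EuclideanSpace ℝ (Fin n)) ∨ c < ‖((A0.symm : EuclideanSpace ℝ (Fin n) →L[ℝ] EuclideanSpace ℝ (Fin n)) : EuclideanSpace ℝ (Fin n) →L[ℝ] EuclideanSpace ℝ (Fin n))‖₊⁻¹ := by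
    rcases subsingleton_or_nontrivial (EuclideanSpace ℝ (Fin n)) with hsub | hnt
    · exact Or.inl hsub
    · right
      have h1 : ((A0.symm : EuclideanSpace ℝ (Fin n) →L[ℝ] EuclideanSpace ℝ (Fin n)) : EuclideanSpace ℝ (Fin n) →L[ℝ] EuclideanSpace ℝ (Fin n)) = ContinuousLinearMap.id ℝ (EuclideanSpace ℝ (Fin n)) := by
        simp [hA0]
      rw [h1, ContinuousLinearMap.nnnorm_id, inv_one]
      have : (c : ℝ) < 1 := by rw [hcr]; exact hαL
      exact_mod_cast this
  have hinj : Function.Injective g :=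
    Set.injOn_univ.mp (happrox.injOn hcN)
  have hsurjg : Function.Surjective g := happrox.surjective hcN
  have hbij : Function.Bijective g := ⟨hinj, hsurjg⟩
  refine ⟨hgc, hbij, ?_⟩
  -- the inverse is C¹ by the inverse function theorem at each point
  rw [contDiff_iff_contDiffAt]
  intro y
  set x : EuclideanSpace ℝ (Fin n) := Function.invFun g y with hx
  have hgx : g x = y := Function.rightInverse_invFun hsurjg y
  have hgradAt : HasFDerivAt (gradient f) (fderiv ℝ (gradient f) x) x :=
    ((hgrad.differentiable one_ne_zero) x).hasFDerivAt
  set T : EuclideanSpace ℝ (Fin n) →L[ℝ] EuclideanSpace ℝ (Fin n) := α • (P.comp (fderiv ℝ (gradient f) x)) with hT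
  have hTnorm : ‖T‖ < 1 := by
    have h1 : ‖fderiv ℝ (gradient f) x‖ ≤ L := by
      have := hgradAt.le_of_lipschitz hlip
      rwa [hL'] at this
    have hPnorm : ‖P‖ ≤ 1 :=
      P.opNorm_le_bound zero_le_one (fun v => by
        rw [one_mul]; exact norm_projCLM_apply_le blk s v)
    have h2 : ‖P.comp (fderiv ℝ (gradient f) x)‖ ≤ L := by
      refine le_trans (ContinuousLinearMap.opNorm_comp_le _ _) ?_
      calc ‖P‖ * ‖fderiv ℝ (gradient f) x‖ ≤ 1 * L :=
            mul_le_mul hPnorm h1 (norm_nonneg _) zero_le_one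
        _ = L := one_mul L
    have hTle : ‖T‖ ≤ α * L := by
      rw [hT]
      refine le_trans (ContinuousLinearMap.opNorm_smul_le _ _) ?_
      rw [Real.norm_eq_abs, abs_of_pos hα]
      exact mul_le_mul_of_nonneg_left h2 hα.le
    exact lt_of_le_of_lt hTle hαL
  set u : (EuclideanSpace ℝ (Fin n) →L[ℝ] EuclideanSpace ℝ (Fin n))ˣ := Units.oneSub T hTnorm with hu
  set A : EuclideanSpace ℝ (Fin n) ≃L[ℝ] EuclideanSpace ℝ (Fin n) := ContinuousLinearEquiv.unitsEquiv ℝ (EuclideanSpace ℝ (Fin n)) u with hA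
  have hAcoe : (A : EuclideanSpace ℝ (Fin n) →L[ℝ] EuclideanSpace ℝ (Fin n)) = 1 - T := rfl
  have hderiv : HasFDerivAt g ((A : EuclideanSpace ℝ (Fin n) →L[ℝ] EuclideanSpace ℝ (Fin n))) x := by
    rw [hAcoe]
    have h1 : HasFDerivAt (fun z => z - α • P (gradient f z))
        (ContinuousLinearMap.id ℝ (EuclideanSpace ℝ (Fin n)) - T) x := by
      refine HasFDerivAt.sub (hasFDerivAt_id x) ?_
      exact ((P.hasFDerivAt.comp x hgradAt)).const_smul α
    rw [← hfg] at h1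
    convert h1 using 2
    rfl
  have hca : ContDiffAt ℝ 1 g x := hgc.contDiffAt
  have hloc : ContDiffAt ℝ 1 (hca.localInverse hderiv one_ne_zero) (g x) :=
    hca.to_localInverse hderiv one_ne_zero
  rw [hgx] at hloc
  refine hloc.congr_of_eventuallyEq ?_
  have hri : ∀ᶠ z in 𝓝 (g x), g (hca.localInverse hderiv one_ne_zero z) = z :=
    (hca.hasStrictFDerivAt' hderiv one_ne_zero).eventually_right_inverse
  rw [hgx] at hri
  filter_upwards [hri] with z hz
  conv_lhs => rw [← hz]
  exact Function.leftInverse_invFun hinj _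

end
end

section
/- Let 0 < α < 1/L. Then the composite block coordinate gradient descent map g_{αf} = g^p_{αf} ∘ g^{p−1}_{αf} ∘ ⋯ ∘ g^1_{αf} is a diffeomorphism of ℝⁿ, i.e. a continuously differentiable bijection whose inverse is continuously differentiable. -/
open Matrix MeasureTheory Filter Topology

noncomputable section

section AuxDiffeo

variable {E : Type*} [NormedAddCommGroup E] [NormedSpace ℝ E]

lemma aux_invFun_comp_of_bijective {g h : E → E} (hg : Function.Bijective g)
    (hh : Function.Bijective h) :
    Function.invFun (g ∘ h) = Function.invFun h ∘ Function.invFun g := by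
  haveI : Nonempty E := ⟨0⟩
  funext y
  apply (hg.comp hh).injective
  have h1 : (g ∘ h) (Function.invFun (g ∘ h) y) = y :=
    Function.invFun_eq ((hg.comp hh).surjective y)
  have h2 : g (Function.invFun g y) = y := Function.invFun_eq (hg.surjective y)
  have h3 : h (Function.invFun h (Function.invFun g y)) = Function.invFun g y :=
    Function.invFun_eq (hh.surjective _)
  calc (g ∘ h) (Function.invFun (g ∘ h) y) = y := h1
    _ = (g ∘ h) ((Function.invFun h ∘ Function.invFun g) y) := by
        simp only [Function.comp_apply, h3, h2]

lemma aux_isDiffeomorphism_id : IsDiffeomorphism (id : E → E) := by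
  haveI : Nonempty E := ⟨0⟩
  refine ⟨contDiff_id, Function.bijective_id, ?_⟩
  have h : Function.invFun (id : E → E) = id := by
    funext x
    exact Function.leftInverse_invFun Function.injective_id x
  rw [h]; exact contDiff_id

lemma aux_IsDiffeomorphism.comp {g h : E → E} (hg : IsDiffeomorphism g)
    (hh : IsDiffeomorphism h) : IsDiffeomorphism (g ∘ h) := by
  obtain ⟨hg1, hg2, hg3⟩ := hg
  obtain ⟨hh1, hh2, hh3⟩ := hh
  refine ⟨hg1.comp hh1, hg2.comp hh2, ?_⟩
  rw [aux_invFun_comp_of_bijective hg2 hh2]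
  exact hh3.comp hg3

/-- If `φ` is `C¹` and a contraction, then `x ↦ x - φ x` is a diffeomorphism. -/
lemma aux_isDiffeomorphism_id_sub [CompleteSpace E] (φ : E → E) (c : NNReal)
    (hc : (c : ℝ) < 1) (hlip : LipschitzWith c φ) (hφ : ContDiff ℝ 1 φ) :
    IsDiffeomorphism (fun x => x - φ x) := by
  haveI : Nonempty E := ⟨0⟩
  set g : E → E := fun x => x - φ x with hgdef
  have hgc : ContDiff ℝ 1 g := contDiff_id.sub hφ
  have hc' : c < 1 := by exact_mod_cast hc
  have hinj : Function.Injective g := by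
    intro x y hxy
    have h : x - φ x = y - φ y := hxy
    rw [sub_eq_sub_iff_sub_eq_sub] at h
    have h2 : ‖x - y‖ ≤ c * ‖x - y‖ := by
      calc ‖x - y‖ = ‖φ x - φ y‖ := by rw [h]
        _ ≤ c * ‖x - y‖ := by simpa [dist_eq_norm] using hlip.dist_le_mul x y
    have h3 : ‖x - y‖ = 0 := by nlinarith [norm_nonneg (x - y)]
    exact sub_eq_zero.mp (norm_eq_zero.mp h3)
  have hsurj : Function.Surjective g := by
    intro y
    have hFlip : LipschitzWith c (fun x => y + φ x) := by
      apply LipschitzWith.of_dist_le_mul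
      intro a b
      simpa [dist_add_left] using hlip.dist_le_mul a b
    have hF : ContractingWith c (fun x => y + φ x) := ⟨hc', hFlip⟩
    refine ⟨hF.fixedPoint _, ?_⟩
    have hx : y + φ (hF.fixedPoint _) = hF.fixedPoint _ := hF.fixedPoint_isFixedPt
    show hF.fixedPoint _ - φ (hF.fixedPoint _) = y
    nth_rewrite 1 [← hx]
    abel
  have hinv : ContDiff ℝ 1 (Function.invFun g) := by
    rw [contDiff_iff_contDiffAt]
    intro y
    obtain ⟨x, rfl⟩ := hsurj y
    have hA : HasFDerivAt φ (fderiv ℝ φ x) x :=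
      ((hφ.differentiable one_ne_zero) x).hasFDerivAt
    have hAnorm : ‖fderiv ℝ φ x‖ < 1 :=
      lt_of_le_of_lt (norm_fderiv_le_of_lipschitz ℝ hlip) hc
    let u : (E →L[ℝ] E)ˣ := Units.oneSub (fderiv ℝ φ x) hAnorm
    let e : E ≃L[ℝ] E := ContinuousLinearEquiv.ofUnit u
    have hecoe : (e : E →L[ℝ] E) = 1 - fderiv ℝ φ x := rfl
    have hg' : HasFDerivAt g (e : E →L[ℝ] E) x := by
      rw [hecoe, ContinuousLinearMap.one_def]
      exact (hasFDerivAt_id x).sub hA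
    have hgat : ContDiffAt ℝ 1 g x := hgc.contDiffAt
    have hli : ContDiffAt ℝ 1 (hgat.localInverse hg' one_ne_zero) (g x) :=
      hgat.to_localInverse hg' one_ne_zero
    have hstrict : HasStrictFDerivAt g (e : E →L[ℝ] E) x :=
      hgat.hasStrictFDerivAt' hg' one_ne_zero
    have heq : Function.invFun g =ᶠ[𝓝 (g x)] hgat.localInverse hg' one_ne_zero := by
      filter_upwards [hstrict.eventually_right_inverse] with z hz
      apply hinj
      rw [Function.invFun_eq (hsurj z)]
      exact hz.symm
    exact hli.congr_of_eventuallyEq heq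
  exact ⟨hgc, ⟨hinj, hsurj⟩, hinv⟩

end AuxDiffeo

/-- The block coordinate projection as a continuous linear map. -/
def auxBlockProjCLM {n p : ℕ} (blk : Fin n → Fin p) (s : Fin p) :
    EuclideanSpace ℝ (Fin n) →L[ℝ] EuclideanSpace ℝ (Fin n) :=
  LinearMap.toContinuousLinearMap
    { toFun := fun v => (WithLp.equiv 2 (Fin n → ℝ)).symm fun i => if blk i = s then v i else 0
      map_add' := by
        intro v w
        ext i
        by_cases h : blk i = s <;> simp [h]
      map_smul' := by
        intro c v
        ext i
        by_cases h : blk i = s <;> simp [h] }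

lemma auxBlockProjCLM_apply {n p : ℕ} (blk : Fin n → Fin p) (s : Fin p)
    (v : EuclideanSpace ℝ (Fin n)) (i : Fin n) :
    auxBlockProjCLM blk s v i = if blk i = s then v i else 0 := rfl

lemma auxBlockProjCLM_norm_le {n p : ℕ} (blk : Fin n → Fin p) (s : Fin p)
    (v : EuclideanSpace ℝ (Fin n)) : ‖auxBlockProjCLM blk s v‖ ≤ ‖v‖ := by
  rw [EuclideanSpace.norm_eq, EuclideanSpace.norm_eq]
  apply Real.sqrt_le_sqrt
  apply Finset.sum_le_sum
  intro i _
  rw [auxBlockProjCLM_apply]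
  by_cases h : blk i = s <;> simp [h] <;> positivity

/-- the composite BCGD map `g_{αf} = g^p ∘ ⋯ ∘ g^1` is a diffeomorphism of ℝⁿ. -/
theorem bcgdMap_isDiffeomorphism
    {n p : ℕ} (hp : 0 < p) (blk : Fin n → Fin p)
    (hmono : Monotone blk) (hsurj : Function.Surjective blk)
    (f : EuclideanSpace ℝ (Fin n) → ℝ) (hf : ContDiff ℝ 2 f)
    (L : ℝ) (hL : 0 < L) (hlip : LipschitzWith (Real.toNNReal L) (gradient f))
    (α : ℝ) (hα : 0 < α) (hα' : α < 1 / L) :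
    IsDiffeomorphism (bcgdMap f α blk) := by
  have hαL : α * L < 1 := (lt_div_iff₀ hL).mp hα'
  -- gradient is C¹
  have hgrad : ContDiff ℝ 1 (gradient f) := by
    have h1 : ContDiff ℝ 1 (fderiv ℝ f) := hf.fderiv_right (by norm_num)
    have h2 : gradient f = fun x =>
        (InnerProductSpace.toDual ℝ (EuclideanSpace ℝ (Fin n))).symm (fderiv ℝ f x) := rfl
    rw [h2]
    exact ((InnerProductSpace.toDual ℝ
      (EuclideanSpace ℝ (Fin n))).symm.toContinuousLinearEquiv.contDiff).comp h1
  -- each block step is a diffeomorphism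
  have hstep : ∀ s : Fin p, IsDiffeomorphism (blockGradStep f α blk s) := by
    intro s
    set P := auxBlockProjCLM blk s with hP
    set φ : EuclideanSpace ℝ (Fin n) → EuclideanSpace ℝ (Fin n) :=
      fun x => α • P (gradient f x) with hφdef
    have hφlip : LipschitzWith (α * L).toNNReal φ := by
      apply LipschitzWith.of_dist_le_mul
      intro x y
      have h1 : φ x - φ y = α • P (gradient f x - gradient f y) := by
        simp [hφdef, map_sub, smul_sub]
      have h2 : ‖P (gradient f x - gradient f y)‖ ≤ ‖gradient f x - gradient f y‖ :=
        auxBlockProjCLM_norm_le blk s _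
      have h3 : ‖gradient f x - gradient f y‖ ≤ L * ‖x - y‖ := by
        have h := hlip.dist_le_mul x y
        rw [dist_eq_norm, dist_eq_norm] at h
        simpa [Real.coe_toNNReal _ hL.le] using h
      rw [dist_eq_norm, dist_eq_norm, h1, norm_smul,
        Real.coe_toNNReal _ (by positivity : (0:ℝ) ≤ α * L)]
      calc |α| * ‖P (gradient f x - gradient f y)‖
          ≤ α * (L * ‖x - y‖) := by
            rw [abs_of_pos hα]
            exact mul_le_mul_of_nonneg_left (h2.trans h3) hα.le
        _ = α * L * ‖x - y‖ := by ring
    have hφcd : ContDiff ℝ 1 φ := (P.contDiff.comp hgrad).const_smul α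
    have hsteprw : blockGradStep f α blk s = fun x => x - φ x := by
      funext x
      ext i
      show x i - (if blk i = s then α * gradient f x i else 0) = (x - φ x) i
      have hφi : φ x i = α * (if blk i = s then gradient f x i else 0) := by
        show (α • P (gradient f x)) i = _
        rw [PiLp.smul_apply, smul_eq_mul, hP, auxBlockProjCLM_apply]
      rw [PiLp.sub_apply, hφi]
      by_cases h : blk i = s <;> simp [h]
    rw [hsteprw]
    exact aux_isDiffeomorphism_id_sub φ (α * L).toNNReal
      (by rwa [Real.coe_toNNReal _ (by positivity : (0:ℝ) ≤ α * L)]) hφlip hφcd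
  -- fold over the list of blocks
  have hall : ∀ l : List (Fin p),
      IsDiffeomorphism (fun x : EuclideanSpace ℝ (Fin n) =>
        l.foldl (fun y s => blockGradStep f α blk s y) x) := by
    intro l
    induction l with
    | nil => exact aux_isDiffeomorphism_id
    | cons a l ih =>
        have h : (fun x : EuclideanSpace ℝ (Fin n) =>
            (a :: l).foldl (fun y s => blockGradStep f α blk s y) x)
            = (fun x => l.foldl (fun y s => blockGradStep f α blk s y) x)
              ∘ (blockGradStep f α blk a) := rfl
        rw [h]
        exact aux_IsDiffeomorphism.comp ih (hstep a)
  exact hall (List.finRange p)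

end
end

section
/- Let 0 < α < 1/L and let the sequence (x_k) be generated by block coordinate gradient descent, i.e. x_{k+1} = g_{αf}(x_k). If the limit x* = lim_{k→∞} x_k exists, then x* is a critical point of f, i.e. ∇f(x*) = 0. -/
open Matrix MeasureTheory Filter Topology

noncomputable section

/-- if the BCGD iterates converge, the limit is a critical point of `f`. -/
theorem bcgd_limit_is_critical_point
    {n p : ℕ} (hp : 0 < p) (blk : Fin n → Fin p)
    (hmono : Monotone blk) (hsurj : Function.Surjective blk)
    (f : EuclideanSpace ℝ (Fin n) → ℝ) (hf : ContDiff ℝ 2 f)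
    (L : ℝ) (hL : 0 < L) (hlip : LipschitzWith (Real.toNNReal L) (gradient f))
    (α : ℝ) (hα : 0 < α) (hα' : α < 1 / L)
    (x : ℕ → EuclideanSpace ℝ (Fin n))
    (hx : ∀ k, x (k + 1) = bcgdMap f α blk (x k))
    (xs : EuclideanSpace ℝ (Fin n)) (hlim : Tendsto x atTop (nhds xs)) :
    gradient f xs = 0 := by
  classical
  set step : Fin p → EuclideanSpace ℝ (Fin n) → EuclideanSpace ℝ (Fin n) :=
    fun s y => blockGradStep f α blk s y with hstepdef
  have hgradc : Continuous (gradient f) := hlip.continuous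
  -- coordinate formula for a step
  have hcoord : ∀ (t : Fin p) (y : EuclideanSpace ℝ (Fin n)) (i : Fin n),
      step t y i = y i - (if blk i = t then α * gradient f y i else 0) := by
    intro t y i
    rfl
  have hcoord' : ∀ (t : Fin p) (y : EuclideanSpace ℝ (Fin n)) (i : Fin n), blk i ≠ t → step t y i = y i := by
    intro t y i h
    rw [hcoord, if_neg h, sub_zero]
  -- continuity of each step
  have hstepc : ∀ t : Fin p, Continuous (step t) := by
    intro t
    have h1 : Continuous fun (y : EuclideanSpace ℝ (Fin n)) => (fun i : Fin n =>
        y i - (if blk i = t then α * gradient f y i else 0)) := by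
      apply continuous_pi
      intro i
      apply Continuous.sub
      · exact (continuous_apply i).comp (PiLp.continuous_ofLp 2 fun _ : Fin n => ℝ)
      · by_cases hb : blk i = t
        · simp only [hb, if_pos]
          exact continuous_const.mul
            (((continuous_apply i).comp (PiLp.continuous_ofLp 2 fun _ : Fin n => ℝ)).comp hgradc)
        · simp only [hb, if_neg, if_false]
          exact continuous_const
    exact (PiLp.continuous_toLp 2 fun _ : Fin n => ℝ).comp h1
  -- continuity of the full map
  have hcontl : ∀ l : List (Fin p), Continuous (fun y : EuclideanSpace ℝ (Fin n) => l.foldl (fun z s => step s z) y) := by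
    intro l
    induction l with
    | nil => exact continuous_id
    | cons a l ih =>
        simp only [List.foldl_cons]
        exact ih.comp (hstepc a)
  have hcont : Continuous (bcgdMap f α blk) := hcontl (List.finRange p)
  -- the limit is a fixed point
  have hfix : bcgdMap f α blk xs = xs := by
    have h1 : Tendsto (fun k => x (k + 1)) atTop (nhds xs) :=
      hlim.comp (tendsto_add_atTop_nat 1)
    have h2 : Tendsto (fun k => bcgdMap f α blk (x k)) atTop (nhds (bcgdMap f α blk xs)) :=
      (hcont.tendsto xs).comp hlim
    have h3 : Tendsto (fun k => x (k + 1)) atTop (nhds (bcgdMap f α blk xs)) := by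
      simpa only [hx] using h2
    exact tendsto_nhds_unique h3 h1
  -- partial iterates
  set Y : ℕ → EuclideanSpace ℝ (Fin n) := fun m => ((List.finRange p).take m).foldl (fun z s => step s z) xs with hYdef
  have hY0 : Y 0 = xs := rfl
  have hYp : Y p = xs := by
    have : (List.finRange p).take p = List.finRange p :=
      List.take_of_length_le (by simp)
    simp only [hYdef, this]
    exact hfix
  have hYsucc : ∀ m (hm : m < p), Y (m + 1) = step ⟨m, hm⟩ (Y m) := by
    intro m hm
    have hlen : m < (List.finRange p).length := by simpa using hm
    have htake : (List.finRange p).take (m + 1)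
        = (List.finRange p).take m ++ [(⟨m, hm⟩ : Fin p)] := by
      rw [List.take_succ, List.getElem?_eq_getElem hlen]
      simp [List.getElem_finRange]
    simp only [hYdef, htake, List.foldl_append, List.foldl_cons, List.foldl_nil]
  -- later steps don't touch coordinate i once its block is done
  have hlater : ∀ (i : Fin n) (m : ℕ) (_ : (blk i : ℕ) = m) (k : ℕ),
      m + 1 ≤ k → k ≤ p → Y k i = Y (m + 1) i := by
    intro i m hbi k hk
    induction k, hk using Nat.le_induction with
    | base => intro _; rfl
    | succ k hk ih =>
        intro hkp
        have hkp' : k < p := hkp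
        rw [hYsucc k hkp', hcoord' ⟨k, hkp'⟩ (Y k) i ?_, ih hkp'.le]
        intro hcontra
        have : (blk i : ℕ) = k := by rw [hcontra]
        omega
  -- all partial iterates equal xs
  have key : ∀ m, m ≤ p → Y m = xs := by
    intro m
    induction m with
    | zero => intro _; exact hY0
    | succ m ih =>
        intro h
        have hm : m < p := h
        have hxm : Y m = xs := ih hm.le
        rw [hYsucc m hm, hxm]
        ext i
        by_cases hb : blk i = ⟨m, hm⟩
        · have h1 : Y p i = Y (m + 1) i := by
            refine hlater i m ?_ p (by omega) le_rfl
            rw [hb]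
          rw [hYp] at h1
          rw [hYsucc m hm, hxm] at h1
          exact h1.symm
        · exact hcoord' _ _ _ hb
  -- conclude gradient is zero
  ext i
  have hm : (blk i : ℕ) < p := (blk i).isLt
  have h1 : Y ((blk i : ℕ) + 1) = xs := key _ hm
  have h2 : Y (blk i : ℕ) = xs := key _ hm.le
  have h3 : step ⟨(blk i : ℕ), hm⟩ xs = xs := by
    conv_lhs => rw [← h2]
    rw [← hYsucc _ hm, h1]
  have h4 := congrFun (congrArg WithLp.ofLp h3) i
  rw [hcoord] at h4
  have hb : blk i = ⟨(blk i : ℕ), hm⟩ := by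
    apply Fin.ext; rfl
  rw [if_pos hb] at h4
  have h5 : α * gradient f xs i = 0 := by linarith [h4]
  have h6 : gradient f xs i = 0 := by
    rcases mul_eq_zero.mp h5 with h | h
    · exact absurd h hα.ne'
    · exact h
  simpa using h6

end
end

section
/- Let 0 < α < μ/L. Then for each s = 1,…,p the block mirror descent map ψ_s : ℝⁿ → ℝⁿ defined by ψ_s(x) = (I_n − U_sU_sᵀ)x + U_s (∇φ_s)^{-1}(∇φ_s(x(s)) − α∇_s f(x)) is a diffeomorphism of ℝⁿ, i.e. a continuously differentiable bijection whose inverse is continuously differentiable. -/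
set_option maxHeartbeats 1000000


open Matrix MeasureTheory Filter Topology

noncomputable section

/-- Restriction of a vector to the coordinates of block `s`. -/
def restrictBlk {n p : ℕ} (blk : Fin n → Fin p) (s : Fin p) (v : EuclideanSpace ℝ (Fin n)) :
    EuclideanSpace ℝ {i : Fin n // blk i = s} :=
  (WithLp.equiv 2 ({i : Fin n // blk i = s} → ℝ)).symm fun i => v i.1

/-- The block mirror descent step
`ψ_s(x) = (I − U_sU_sᵀ)x + U_s (∇φ_s)⁻¹(∇φ_s(x(s)) − α ∇_s f(x))`. -/
def bmdStep {n p : ℕ} (f : EuclideanSpace ℝ (Fin n) → ℝ) (blk : Fin n → Fin p)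
    (φ : ∀ s : Fin p, EuclideanSpace ℝ {i : Fin n // blk i = s} → ℝ) (α : ℝ) (s : Fin p)
    (x : EuclideanSpace ℝ (Fin n)) : EuclideanSpace ℝ (Fin n) :=
  (WithLp.equiv 2 (Fin n → ℝ)).symm fun i =>
    if h : blk i = s then
      Function.invFun (gradient (φ s))
        (gradient (φ s) (restrictBlk blk s x) - α • restrictBlk blk s (gradient f x)) ⟨i, h⟩
    else x i

/-- The block mirror descent map `ψ = ψ_p ∘ ⋯ ∘ ψ_1` (block 1 is applied first). -/
def bmdMap {n p : ℕ} (f : EuclideanSpace ℝ (Fin n) → ℝ) (blk : Fin n → Fin p)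
    (φ : ∀ s : Fin p, EuclideanSpace ℝ {i : Fin n // blk i = s} → ℝ) (α : ℝ)
    (x : EuclideanSpace ℝ (Fin n)) : EuclideanSpace ℝ (Fin n) :=
  (List.finRange p).foldl (fun y s => bmdStep f blk φ α s y) x


open Filter Topology Function Set
open scoped InnerProductSpace

noncomputable section HelpersBMD

variable {E : Type*} [NormedAddCommGroup E] [InnerProductSpace ℝ E]

lemma bmd_inner_gradient [CompleteSpace E] (f : E → ℝ) (x v : E) :
    ⟪gradient f x, v⟫_ℝ = fderiv ℝ f x v := by
  rw [gradient]
  exact InnerProductSpace.toDual_symm_apply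

lemma bmd_hasDerivAt_line [CompleteSpace E] {f : E → ℝ} (hf : Differentiable ℝ f) (x d : E) (t : ℝ) :
    HasDerivAt (fun t : ℝ => f (x + t • d)) (⟪gradient f (x + t • d), d⟫_ℝ) t := by
  have h1 : HasDerivAt (fun t : ℝ => x + t • d) d t := by
    simpa using ((hasDerivAt_id t).smul_const d).const_add x
  have h2 := ((hf (x + t • d)).hasFDerivAt).comp_hasDerivAt t h1
  rw [bmd_inner_gradient]
  exact h2

/-- tangent-line lower bound from strong monotonicity of the gradient -/
lemma bmd_tangent_of_mono [CompleteSpace E] {h : E → ℝ} (hd : Differentiable ℝ h) {m : ℝ}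
    (hm : ∀ a b, m * ‖a - b‖ ^ 2 ≤ ⟪gradient h a - gradient h b, a - b⟫_ℝ)
    (x z : E) : h x + ⟪gradient h x, z - x⟫_ℝ + m / 2 * ‖z - x‖ ^ 2 ≤ h z := by
  set d := z - x with hdd
  set c := ⟪gradient h x, d⟫_ℝ with hc
  set r : ℝ → ℝ := fun t => h (x + t • d) - t * c - m / 2 * t ^ 2 * ‖d‖ ^ 2 with hr
  have hder : ∀ t : ℝ, HasDerivAt r
      (⟪gradient h (x + t • d), d⟫_ℝ - c - m / 2 * (2 * t) * ‖d‖ ^ 2) t := by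
    intro t
    have h1 := bmd_hasDerivAt_line hd x d t
    have h2 : HasDerivAt (fun t : ℝ => t * c) c t := by simpa using (hasDerivAt_id t).mul_const c
    have h3 : HasDerivAt (fun t : ℝ => m / 2 * t ^ 2 * ‖d‖ ^ 2) (m / 2 * (2 * t) * ‖d‖ ^ 2) t := by
      have := ((hasDerivAt_pow 2 t).const_mul (m / 2)).mul_const (‖d‖ ^ 2)
      simpa [mul_comm, mul_assoc, mul_left_comm] using this
    exact (h1.sub h2).sub h3
  have hmono : MonotoneOn r (Icc (0:ℝ) 1) := by
    apply monotoneOn_of_deriv_nonneg (convex_Icc 0 1)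
    · exact Continuous.continuousOn (by
        have : Continuous r := by
          apply Continuous.sub
          apply Continuous.sub
          · exact hd.continuous.comp (by continuity)
          · continuity
          · continuity
        exact this)
    · intro t _; exact (hder t).differentiableAt.differentiableWithinAt
    · intro t ht
      rw [interior_Icc] at ht
      rw [(hder t).deriv]
      have key := hm (x + t • d) x
      have he : (x + t • d) - x = t • d := by abel
      rw [he] at key
      rw [gradient] at key
      have hinner : ⟪gradient h (x + t • d) - gradient h x, t • d⟫_ℝ
          = t * (⟪gradient h (x + t • d), d⟫_ℝ - c) := by
        rw [real_inner_smul_right, inner_sub_left, hc]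
      rw [← gradient] at key
      rw [hinner] at key
      have hn : ‖t • d‖ ^ 2 = t ^ 2 * ‖d‖ ^ 2 := by
        rw [norm_smul, mul_pow, Real.norm_eq_abs, sq_abs]
      rw [hn] at key
      have ht0 : 0 < t := ht.1
      nlinarith [key]
  have h01 := hmono (Set.left_mem_Icc.mpr zero_le_one) (Set.right_mem_Icc.mpr zero_le_one) zero_le_one
  have hr0 : r 0 = h x := by simp [hr]
  have hr1 : r 1 = h z - c - m / 2 * ‖d‖ ^ 2 := by
    simp [hr, hdd]
  rw [hr0, hr1] at h01
  rw [hc] at *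
  linarith [h01]

end HelpersBMD

open Filter Topology Function Set
open scoped InnerProductSpace

noncomputable section HelpersBMD2

variable {E : Type*} [NormedAddCommGroup E] [InnerProductSpace ℝ E]

/-- tangent-line lower bound from strong convexity -/
lemma bmd_tangent_of_strongConvex [CompleteSpace E] {g : E → ℝ} (hg : Differentiable ℝ g) {m : ℝ}
    (hsc : StrongConvexOn Set.univ m g) (x y : E) :
    g x + ⟪gradient g x, y - x⟫_ℝ + m / 2 * ‖y - x‖ ^ 2 ≤ g y := by
  set d := y - x with hdd
  -- derivative of t ↦ g (x + t • d) at 0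
  have hq0 : HasDerivAt (fun t : ℝ => g (x + t • d)) (⟪gradient g x, d⟫_ℝ) 0 := by
    have := bmd_hasDerivAt_line hg x d 0
    simpa using this
  have hslope : Tendsto (fun t : ℝ => (g (x + t • d) - g x) / t) (𝓝[>] (0:ℝ))
      (𝓝 (⟪gradient g x, d⟫_ℝ)) := by
    have h1 := hasDerivAt_iff_tendsto_slope.mp hq0
    have h2 : Tendsto (slope (fun t : ℝ => g (x + t • d)) 0) (𝓝[>] (0:ℝ))
        (𝓝 (⟪gradient g x, d⟫_ℝ)) :=
      h1.mono_left (nhdsWithin_mono _ (fun t ht => ne_of_gt ht))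
    refine h2.congr' ?_
    filter_upwards [self_mem_nhdsWithin] with t ht
    simp [slope_def_field]
  have hRHS : Tendsto (fun t : ℝ => g y - g x - (1 - t) * (m / 2 * ‖d‖ ^ 2)) (𝓝[>] (0:ℝ))
      (𝓝 (g y - g x - m / 2 * ‖d‖ ^ 2)) := by
    have hc : Continuous (fun t : ℝ => g y - g x - (1 - t) * (m / 2 * ‖d‖ ^ 2)) := by continuity
    have h := (hc.tendsto 0).mono_left (nhdsWithin_le_nhds (s := Set.Ioi (0:ℝ)))
    simpa using h
  have hle : ⟪gradient g x, d⟫_ℝ ≤ g y - g x - m / 2 * ‖d‖ ^ 2 := by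
    refine le_of_tendsto_of_tendsto hslope hRHS ?_
    filter_upwards [Ioo_mem_nhdsGT_of_mem (by constructor <;> norm_num : (0:ℝ) ∈ Ico (0:ℝ) 1)]
      with t ht
    have ht0 := ht.1
    have ht1 := ht.2
    have key := hsc.2 (mem_univ y) (mem_univ x) (le_of_lt ht0) (by linarith : (0:ℝ) ≤ 1 - t)
      (by ring)
    have hpt : t • y + (1 - t) • x = x + t • d := by
      rw [hdd, smul_sub, sub_smul, one_smul]; abel
    rw [hpt] at key
    have hnorm : ‖y - x‖ = ‖d‖ := by rw [hdd]
    rw [hnorm] at key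
    -- key : g (x + t • d) ≤ t * g y + (1-t) * g x - t*(1-t)*(m/2*‖d‖^2)
    have ht0' : 0 < t := ht0
    rw [div_le_iff₀ ht0']
    simp only [smul_eq_mul] at key
    nlinarith [key]
  linarith [hle]

lemma bmd_mono_of_strongConvex [CompleteSpace E] {g : E → ℝ} (hg : Differentiable ℝ g) {m : ℝ}
    (hsc : StrongConvexOn Set.univ m g) (a b : E) :
    m * ‖a - b‖ ^ 2 ≤ ⟪gradient g a - gradient g b, a - b⟫_ℝ := by
  have h1 := bmd_tangent_of_strongConvex hg hsc a b
  have h2 := bmd_tangent_of_strongConvex hg hsc b a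
  have hn : ‖b - a‖ = ‖a - b‖ := norm_sub_rev _ _
  rw [hn] at h1
  have e1 : ⟪gradient g a - gradient g b, a - b⟫_ℝ
      = ⟪gradient g a, a - b⟫_ℝ - ⟪gradient g b, a - b⟫_ℝ := by
    rw [inner_sub_left]
  have e2 : ⟪gradient g a, b - a⟫_ℝ = -⟪gradient g a, a - b⟫_ℝ := by
    rw [show b - a = -(a-b) by abel, inner_neg_right]
  rw [e2] at h1
  nlinarith [h1, h2, e1]

/-- surjectivity of the gradient of a function with strongly monotone gradient -/
lemma bmd_surj_of_mono [FiniteDimensional ℝ E] {h : E → ℝ} (hd : Differentiable ℝ h) {m : ℝ}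
    (hm0 : 0 < m)
    (hm : ∀ a b, m * ‖a - b‖ ^ 2 ≤ ⟪gradient h a - gradient h b, a - b⟫_ℝ) :
    Function.Surjective (gradient h) := by
  intro y
  set k : E → ℝ := fun z => h z - ⟪y, z⟫_ℝ with hk
  have hkd : Differentiable ℝ k := hd.sub (innerSL ℝ y).differentiable
  have hgradk : ∀ z, gradient k z = gradient h z - y := by
    intro z
    have h1 : HasFDerivAt k (fderiv ℝ h z - innerSL ℝ y) z := by
      exact (hd z).hasFDerivAt.sub (innerSL ℝ y).hasFDerivAt
    have h2 : fderiv ℝ k z = fderiv ℝ h z - innerSL ℝ y := h1.fderiv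
    rw [gradient, h2, map_sub, ← gradient]
    congr 1
    apply (InnerProductSpace.toDual ℝ E).symm_apply_eq.mpr
    ext v
    simp [InnerProductSpace.toDual_apply_apply]
  have hmk : ∀ a b, m * ‖a - b‖ ^ 2 ≤ ⟪gradient k a - gradient k b, a - b⟫_ℝ := by
    intro a b
    rw [hgradk, hgradk, show gradient h a - y - (gradient h b - y) = gradient h a - gradient h b by abel]
    exact hm a b
  have hlb : ∀ z, k 0 + ⟪gradient k 0, z⟫_ℝ + m / 2 * ‖z‖ ^ 2 ≤ k z := by
    intro z
    have := bmd_tangent_of_mono hkd hmk 0 z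
    simpa using this
  have hcoer : ∀ᶠ z in cocompact E, k 0 ≤ k z := by
    have hn : Tendsto (fun z : E => ‖z‖) (cocompact E) atTop := tendsto_norm_cocompact_atTop
    filter_upwards [hn.eventually (eventually_ge_atTop (2 * ‖gradient k 0‖ / m))] with z hz
    have h1 := hlb z
    have h2 : -(‖gradient k 0‖ * ‖z‖) ≤ ⟪gradient k 0, z⟫_ℝ := by
      have := abs_real_inner_le_norm (gradient k 0) z
      cases' abs_le.mp this with hl hr
      linarith
    have h3 : 0 ≤ ‖z‖ := norm_nonneg z
    have h4 : 2 * ‖gradient k 0‖ / m ≤ ‖z‖ := hz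
    have h5 : 2 * ‖gradient k 0‖ ≤ m * ‖z‖ := by
      rw [div_le_iff₀ hm0] at h4; linarith [h4]
    have h6 : 2 * ‖gradient k 0‖ * ‖z‖ ≤ m * ‖z‖ * ‖z‖ :=
      mul_le_mul_of_nonneg_right h5 h3
    have h7 : ‖gradient k 0‖ * ‖z‖ ≤ m / 2 * ‖z‖ ^ 2 := by nlinarith [h6]
    calc k 0 ≤ k 0 + (⟪gradient k 0, z⟫_ℝ + ‖gradient k 0‖ * ‖z‖)
          + (m / 2 * ‖z‖ ^ 2 - ‖gradient k 0‖ * ‖z‖) := by linarith [h2, h7]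
      _ = k 0 + ⟪gradient k 0, z⟫_ℝ + m / 2 * ‖z‖ ^ 2 := by ring
      _ ≤ k z := h1
  obtain ⟨w, hw⟩ := (hkd.continuous).exists_forall_le' 0 hcoer
  have hmin : IsLocalMin k w := Filter.Eventually.of_forall hw |>.mono (fun z hz => hz)
  have hfd : fderiv ℝ k w = 0 := hmin.fderiv_eq_zero
  have : gradient k w = 0 := by rw [gradient, hfd, map_zero]
  rw [hgradk w] at this
  exact ⟨w, by rwa [sub_eq_zero] at this⟩

end HelpersBMD2

open Filter Topology Function Set
open scoped InnerProductSpace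

noncomputable section HelpersBMD3

variable {E : Type*} [NormedAddCommGroup E] [InnerProductSpace ℝ E]

/-- coercivity of the derivative of a strongly monotone map -/
lemma bmd_fderiv_coercive {F : E → E} {m : ℝ}
    (hm : ∀ a b, m * ‖a - b‖ ^ 2 ≤ ⟪F a - F b, a - b⟫_ℝ)
    {D : E →L[ℝ] E} {x : E} (hD : HasFDerivAt F D x) (v : E) :
    m * ‖v‖ ^ 2 ≤ ⟪D v, v⟫_ℝ := by
  have hline : HasDerivAt (fun t : ℝ => F (x + t • v)) (D v) 0 := by
    have hl : HasDerivAt (fun t : ℝ => x + t • v) v 0 := by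
      simpa using ((hasDerivAt_id (0:ℝ)).smul_const v).const_add x
    have hD' : HasFDerivAt F D (x + (0:ℝ) • v) := by simpa using hD
    have h2 := hD'.comp_hasDerivAt 0 hl
    exact h2
  have hslope := hasDerivAt_iff_tendsto_slope.mp hline
  have h3 : Tendsto (fun t : ℝ => ⟪slope (fun t : ℝ => F (x + t • v)) 0 t, v⟫_ℝ) (𝓝[>] (0:ℝ))
      (𝓝 (⟪D v, v⟫_ℝ)) := by
    have := (hslope.mono_left (nhdsWithin_mono _ (fun t (ht : t ∈ Ioi (0:ℝ)) => ne_of_gt ht)))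
    exact Tendsto.inner this tendsto_const_nhds
  refine ge_of_tendsto h3 ?_
  filter_upwards [self_mem_nhdsWithin] with t ht
  have ht0 : 0 < t := ht
  have key := hm (x + t • v) x
  have he : x + t • v - x = t • v := by abel
  rw [he] at key
  have hsl : slope (fun t : ℝ => F (x + t • v)) 0 t = t⁻¹ • (F (x + t • v) - F x) := by
    rw [slope_def_module]
    simp
  rw [hsl, real_inner_smul_left]
  have hinner : ⟪F (x + t • v) - F x, t • v⟫_ℝ = t * ⟪F (x + t • v) - F x, v⟫_ℝ :=
    real_inner_smul_right _ _ _
  rw [hinner] at key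
  have hnorm : ‖t • v‖ ^ 2 = t ^ 2 * ‖v‖ ^ 2 := by
    rw [norm_smul, mul_pow, Real.norm_eq_abs, sq_abs]
  rw [hnorm] at key
  have h4 : m * t * ‖v‖ ^ 2 ≤ ⟪F (x + t • v) - F x, v⟫_ℝ := by nlinarith [key]
  have h5 : m * ‖v‖ ^ 2 ≤ t⁻¹ * ⟪F (x + t • v) - F x, v⟫_ℝ := by
    rw [← mul_le_mul_iff_right₀ ht0]
    calc t * (m * ‖v‖ ^ 2) = m * t * ‖v‖ ^ 2 := by ring
    _ ≤ ⟪F (x + t • v) - F x, v⟫_ℝ := h4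
    _ = t * (t⁻¹ * ⟪F (x + t • v) - F x, v⟫_ℝ) := by
        rw [← mul_assoc, mul_inv_cancel₀ (ne_of_gt ht0), one_mul]
  exact h5

lemma bmd_equiv_of_injective [FiniteDimensional ℝ E] {D : E →L[ℝ] E}
    (hinj : Function.Injective D) : ∃ e : E ≃L[ℝ] E, (e : E →L[ℝ] E) = D := by
  have hbij : Function.Bijective (D : E →ₗ[ℝ] E) :=
    ⟨hinj, LinearMap.injective_iff_surjective.mp hinj⟩
  refine ⟨(LinearEquiv.ofBijective (D : E →ₗ[ℝ] E) hbij).toContinuousLinearEquiv, ?_⟩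
  ext v; rfl

lemma bmd_injective_of_coercive {D : E →L[ℝ] E} {m : ℝ} (hm0 : 0 < m)
    (hc : ∀ v, m * ‖v‖ ^ 2 ≤ ⟪D v, v⟫_ℝ) : Function.Injective D := by
  intro a b hab
  have h1 := hc (a - b)
  rw [map_sub, hab, sub_self] at h1
  rw [inner_zero_left] at h1
  have h2 : ‖a - b‖ ^ 2 ≤ 0 := by nlinarith [h1]
  have h3 : ‖a - b‖ = 0 := by nlinarith [sq_nonneg ‖a - b‖, norm_nonneg (a - b)]
  rwa [norm_sub_eq_zero_iff] at h3

lemma bmd_contDiff_gradient [CompleteSpace E] {f : E → ℝ} (hf : ContDiff ℝ 2 f) :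
    ContDiff ℝ 1 (gradient f) := by
  have h1 : ContDiff ℝ 1 (fderiv ℝ f) := hf.fderiv_right (by norm_num)
  have h2 : ContDiff ℝ 1 (fun x => (InnerProductSpace.toDual ℝ E).symm (fderiv ℝ f x)) :=
    ((InnerProductSpace.toDual ℝ E).symm.toContinuousLinearEquiv :
      StrongDual ℝ E ≃L[ℝ] E).contDiff.comp h1
  exact h2

/-- C¹ global inverse from bijectivity + everywhere-invertible derivative -/
lemma bmd_contDiff_invFun {X : Type*} [NormedAddCommGroup X] [NormedSpace ℝ X]
    [FiniteDimensional ℝ X] {g : X → X} (hg : ContDiff ℝ 1 g)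
    (hbij : Function.Bijective g)
    (he : ∀ x, ∃ e : X ≃L[ℝ] X, (e : X →L[ℝ] X) = fderiv ℝ g x) :
    ContDiff ℝ 1 (Function.invFun g) := by
  rw [contDiff_iff_contDiffAt]
  intro y
  obtain ⟨e, heq⟩ := he (Function.invFun g y)
  set x := Function.invFun g y with hxdef
  have hgx : g x = y := Function.rightInverse_invFun hbij.2 y
  have hfd : HasFDerivAt g (e : X →L[ℝ] X) x := by
    rw [heq]; exact (hg.differentiable one_ne_zero x).hasFDerivAt
  have hca : ContDiffAt ℝ 1 g x := hg.contDiffAt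
  have h1 : ContDiffAt ℝ 1 (hca.localInverse hfd one_ne_zero) (g x) := hca.to_localInverse hfd one_ne_zero
  rw [hgx] at h1
  refine h1.congr_of_eventuallyEq ?_
  have hdefeq : hca.localInverse hfd one_ne_zero
      = (hca.hasStrictFDerivAt' hfd one_ne_zero).localInverse g e x := rfl
  have h2 := (hca.hasStrictFDerivAt' hfd one_ne_zero).eventually_right_inverse
  rw [hgx] at h2
  filter_upwards [h2] with z hz
  have h3 := Function.leftInverse_invFun hbij.1
    ((hca.hasStrictFDerivAt' hfd one_ne_zero).localInverse g e x z)
  rw [hz] at h3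
  rw [hdefeq]
  exact h3

/-- the full package for gradients of strongly-monotone-gradient functions -/
lemma bmd_gradient_package [FiniteDimensional ℝ E] {h : E → ℝ} {m : ℝ} (hm0 : 0 < m)
    (hh : ContDiff ℝ 2 h)
    (hm : ∀ a b, m * ‖a - b‖ ^ 2 ≤ ⟪gradient h a - gradient h b, a - b⟫_ℝ) :
    ContDiff ℝ 1 (gradient h) ∧ Function.Bijective (gradient h) ∧
      ContDiff ℝ 1 (Function.invFun (gradient h)) := by
  have hd : Differentiable ℝ h := hh.differentiable (by norm_num)
  have hg1 : ContDiff ℝ 1 (gradient h) := bmd_contDiff_gradient hh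
  have hinj : Function.Injective (gradient h) := by
    intro a b hab
    have h1 := hm a b
    rw [hab, sub_self, inner_zero_left] at h1
    have h2 : ‖a - b‖ ^ 2 ≤ 0 := by nlinarith [h1]
    have h3 : ‖a - b‖ = 0 := by nlinarith [sq_nonneg ‖a - b‖, norm_nonneg (a - b)]
    rwa [norm_sub_eq_zero_iff] at h3
  have hsurj := bmd_surj_of_mono hd hm0 hm
  have hbij : Function.Bijective (gradient h) := ⟨hinj, hsurj⟩
  refine ⟨hg1, hbij, bmd_contDiff_invFun hg1 hbij fun x => ?_⟩
  have hfd : HasFDerivAt (gradient h) (fderiv ℝ (gradient h) x) x :=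
    (hg1.differentiable one_ne_zero x).hasFDerivAt
  exact bmd_equiv_of_injective (bmd_injective_of_coercive hm0 (bmd_fderiv_coercive hm hfd))

end HelpersBMD3

open Filter Topology Function Set
open scoped InnerProductSpace

noncomputable section HelpersBMD4

variable {n p : ℕ} (blk : Fin n → Fin p) (s : Fin p)

/-- restriction to block `s`, as a continuous linear map -/
def bmdR : EuclideanSpace ℝ (Fin n) →L[ℝ] EuclideanSpace ℝ {i : Fin n // blk i = s} :=
  LinearMap.toContinuousLinearMap
    { toFun := fun v => (WithLp.equiv 2 ({i : Fin n // blk i = s} → ℝ)).symm fun i => v i.1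
      map_add' := fun _ _ => rfl
      map_smul' := fun _ _ => rfl }

/-- extension by zero from block `s`, as a continuous linear map -/
def bmdJ : EuclideanSpace ℝ {i : Fin n // blk i = s} →L[ℝ] EuclideanSpace ℝ (Fin n) :=
  LinearMap.toContinuousLinearMap
    { toFun := fun z => (WithLp.equiv 2 (Fin n → ℝ)).symm fun i =>
        if h : blk i = s then z ⟨i, h⟩ else 0
      map_add' := fun a b => by
        ext i
        by_cases h : blk i = s <;> simp [h, WithLp.equiv_symm_apply, PiLp.add_apply]
      map_smul' := fun c a => by
        ext i
        by_cases h : blk i = s <;> simp [h, WithLp.equiv_symm_apply, PiLp.smul_apply] }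

@[simp] lemma bmdR_apply (v : EuclideanSpace ℝ (Fin n)) (i : {i : Fin n // blk i = s}) :
    bmdR blk s v i = v i.1 := rfl

@[simp] lemma bmdJ_apply (z : EuclideanSpace ℝ {i : Fin n // blk i = s}) (i : Fin n) :
    bmdJ blk s z i = if h : blk i = s then z ⟨i, h⟩ else 0 := rfl

lemma bmdRJ (z : EuclideanSpace ℝ {i : Fin n // blk i = s}) : bmdR blk s (bmdJ blk s z) = z := by
  ext i
  rcases i with ⟨i, hi⟩
  simp [hi]

lemma bmd_adj (z : EuclideanSpace ℝ {i : Fin n // blk i = s}) (w : EuclideanSpace ℝ (Fin n)) :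
    ⟪bmdJ blk s z, w⟫_ℝ = ⟪z, bmdR blk s w⟫_ℝ := by
  classical
  rw [PiLp.inner_apply, PiLp.inner_apply]
  have h1 : ∀ j : {i : Fin n // blk i = s},
      (fun i : Fin n => inner (𝕜 := ℝ) (bmdJ blk s z i) (w i)) j.1
        = inner (𝕜 := ℝ) (z j) (bmdR blk s w j) := by
    rintro ⟨j, hj⟩
    simp [hj]
  have e1 : ∑ j : {i : Fin n // blk i = s}, inner (𝕜 := ℝ) (z j) (bmdR blk s w j)
      = ∑ j : {i : Fin n // blk i = s}, (fun i : Fin n => inner (𝕜 := ℝ) (bmdJ blk s z i) (w i)) j.1 :=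
    Finset.sum_congr rfl fun j _ => (h1 j).symm
  rw [e1, ← Finset.sum_subtype (Finset.filter (fun i => blk i = s) Finset.univ)
    (by intro i; simp) (fun i : Fin n => inner (𝕜 := ℝ) (bmdJ blk s z i) (w i))]
  refine (Finset.sum_filter_of_ne ?_).symm
  intro i _ hne
  by_contra hns
  apply hne
  simp [RCLike.inner_apply, hns]

lemma bmdJ_inner (z z' : EuclideanSpace ℝ {i : Fin n // blk i = s}) :
    ⟪bmdJ blk s z, bmdJ blk s z'⟫_ℝ = ⟪z, z'⟫_ℝ := by
  rw [bmd_adj, bmdRJ]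

lemma bmdJ_norm (z : EuclideanSpace ℝ {i : Fin n // blk i = s}) : ‖bmdJ blk s z‖ = ‖z‖ := by
  have h1 : ‖bmdJ blk s z‖ ^ 2 = ‖z‖ ^ 2 := by
    rw [← real_inner_self_eq_norm_sq, ← real_inner_self_eq_norm_sq, bmdJ_inner]
  exact (pow_left_inj₀ (norm_nonneg _) (norm_nonneg _) (by norm_num)).mp h1

lemma bmdR_nonexpansive (w : EuclideanSpace ℝ (Fin n)) : ‖bmdR blk s w‖ ≤ ‖w‖ := by
  rcases eq_or_lt_of_le (norm_nonneg (bmdR blk s w)) with h0 | h0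
  · rw [← h0]; exact norm_nonneg w
  · have h1 : ‖bmdR blk s w‖ ^ 2 = ⟪bmdJ blk s (bmdR blk s w), w⟫_ℝ := by
      rw [bmd_adj, real_inner_self_eq_norm_sq]
    have h2 : ⟪bmdJ blk s (bmdR blk s w), w⟫_ℝ ≤ ‖bmdJ blk s (bmdR blk s w)‖ * ‖w‖ :=
      real_inner_le_norm _ _
    rw [bmdJ_norm] at h2
    have h3 : ‖bmdR blk s w‖ ^ 2 ≤ ‖bmdR blk s w‖ * ‖w‖ := h1 ▸ h2
    nlinarith [h3, h0]

lemma bmd_gradient_comp {f : EuclideanSpace ℝ (Fin n) → ℝ} (hf : Differentiable ℝ f)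
    (c : EuclideanSpace ℝ (Fin n)) (z : EuclideanSpace ℝ {i : Fin n // blk i = s}) :
    gradient (fun w => f (bmdJ blk s w + c)) z
      = bmdR blk s (gradient f (bmdJ blk s z + c)) := by
  have haff : HasFDerivAt (fun w => bmdJ blk s w + c) (bmdJ blk s) z :=
    (bmdJ blk s).hasFDerivAt.add_const c
  have hcomp := (hf (bmdJ blk s z + c)).hasFDerivAt.comp z haff
  have hgrad : fderiv ℝ (fun w => f (bmdJ blk s w + c)) z
      = (fderiv ℝ f (bmdJ blk s z + c)).comp (bmdJ blk s) := hcomp.fderiv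
  refine ext_inner_right ℝ fun v => ?_
  rw [bmd_inner_gradient, hgrad]
  have h2 : ((fderiv ℝ f (bmdJ blk s z + c)).comp (bmdJ blk s)) v
      = fderiv ℝ f (bmdJ blk s z + c) (bmdJ blk s v) := rfl
  rw [h2, ← bmd_inner_gradient]
  rw [real_inner_comm, bmd_adj]
  exact real_inner_comm _ _

lemma bmd_gradient_sub_smul {X : Type*} [NormedAddCommGroup X] [InnerProductSpace ℝ X]
    [CompleteSpace X] {g1 g2 : X → ℝ} {x : X}
    (h1 : DifferentiableAt ℝ g1 x) (h2 : DifferentiableAt ℝ g2 x) (a : ℝ) :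
    gradient (fun w => g1 w - a * g2 w) x = gradient g1 x - a • gradient g2 x := by
  have hfd : HasFDerivAt (fun w => g1 w - a * g2 w)
      (fderiv ℝ g1 x - a • fderiv ℝ g2 x) x := by
    have := h1.hasFDerivAt.sub ((h2.hasFDerivAt.const_mul a))
    exact this
  refine ext_inner_right ℝ fun v => ?_
  rw [bmd_inner_gradient, hfd.fderiv]
  rw [inner_sub_left, real_inner_smul_left, bmd_inner_gradient, bmd_inner_gradient]
  simp

end HelpersBMD4

open Filter Topology Function Set
open scoped InnerProductSpace

noncomputable section AbstractBMD

variable {X Eb : Type*} [NormedAddCommGroup X] [InnerProductSpace ℝ X] [FiniteDimensional ℝ X]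
  [NormedAddCommGroup Eb] [InnerProductSpace ℝ Eb] [FiniteDimensional ℝ Eb]

lemma bmd_abs_J_inner (J : Eb →L[ℝ] X) (R : X →L[ℝ] Eb)
    (hRJ : ∀ z, R (J z) = z) (hAdj : ∀ z w, ⟪J z, w⟫_ℝ = ⟪z, R w⟫_ℝ)
    (z z' : Eb) : ⟪J z, J z'⟫_ℝ = ⟪z, z'⟫_ℝ := by
  rw [hAdj, hRJ]

lemma bmd_abs_J_norm (J : Eb →L[ℝ] X) (R : X →L[ℝ] Eb)
    (hRJ : ∀ z, R (J z) = z) (hAdj : ∀ z w, ⟪J z, w⟫_ℝ = ⟪z, R w⟫_ℝ)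
    (z : Eb) : ‖J z‖ = ‖z‖ := by
  have h1 : ‖J z‖ ^ 2 = ‖z‖ ^ 2 := by
    rw [← real_inner_self_eq_norm_sq, ← real_inner_self_eq_norm_sq,
      bmd_abs_J_inner J R hRJ hAdj]
  exact (pow_left_inj₀ (norm_nonneg _) (norm_nonneg _) (by norm_num)).mp h1

lemma bmd_abs_R_nonexpansive (J : Eb →L[ℝ] X) (R : X →L[ℝ] Eb)
    (hRJ : ∀ z, R (J z) = z) (hAdj : ∀ z w, ⟪J z, w⟫_ℝ = ⟪z, R w⟫_ℝ)
    (w : X) : ‖R w‖ ≤ ‖w‖ := by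
  rcases eq_or_lt_of_le (norm_nonneg (R w)) with h0 | h0
  · rw [← h0]; exact norm_nonneg w
  · have h1 : ‖R w‖ ^ 2 = ⟪J (R w), w⟫_ℝ := by
      rw [hAdj, real_inner_self_eq_norm_sq]
    have h2 : ⟪J (R w), w⟫_ℝ ≤ ‖J (R w)‖ * ‖w‖ := real_inner_le_norm _ _
    rw [bmd_abs_J_norm J R hRJ hAdj] at h2
    have h3 : ‖R w‖ ^ 2 ≤ ‖R w‖ * ‖w‖ := h1 ▸ h2
    nlinarith [h3, h0]

lemma bmd_abs_gradient_comp (J : Eb →L[ℝ] X) (R : X →L[ℝ] Eb)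
    (hRJ : ∀ z, R (J z) = z) (hAdj : ∀ z w, ⟪J z, w⟫_ℝ = ⟪z, R w⟫_ℝ)
    {g : X → ℝ} (hg : Differentiable ℝ g) (c : X) (z : Eb) :
    gradient (fun w => g (J w + c)) z = R (gradient g (J z + c)) := by
  have haff : HasFDerivAt (fun w : Eb => J w + c) (J : Eb →L[ℝ] X) z :=
    J.hasFDerivAt.add_const c
  have hcomp := (hg (J z + c)).hasFDerivAt.comp z haff
  have hgrad : fderiv ℝ (fun w => g (J w + c)) z
      = (fderiv ℝ g (J z + c)).comp (J : Eb →L[ℝ] X) := hcomp.fderiv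
  refine ext_inner_right ℝ fun v => ?_
  rw [bmd_inner_gradient, hgrad]
  have h2 : ((fderiv ℝ g (J z + c)).comp (J : Eb →L[ℝ] X)) v
      = fderiv ℝ g (J z + c) (J v) := rfl
  rw [h2, ← bmd_inner_gradient]
  rw [real_inner_comm, hAdj]
  exact real_inner_comm _ _

/-- Abstract form of the block mirror descent step diffeomorphism theorem. -/
theorem bmd_abstract (J : Eb →L[ℝ] X) (R : X →L[ℝ] Eb)
    (hRJ : ∀ z, R (J z) = z)
    (hAdj : ∀ z w, ⟪J z, w⟫_ℝ = ⟪z, R w⟫_ℝ)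
    {g : X → ℝ} (hg : ContDiff ℝ 2 g)
    {L : ℝ} (hL : 0 < L) (hlipn : ∀ u v, ‖gradient g u - gradient g v‖ ≤ L * ‖u - v‖)
    {φ : Eb → ℝ} (hφ2 : ContDiff ℝ 2 φ) {mφ : ℝ} (hmφ : 0 < mφ)
    (hsc : StrongConvexOn Set.univ mφ φ)
    {α : ℝ} (hα : 0 < α) (hαL : α * L < mφ) :
    (ContDiff ℝ 1 (fun x => x + J (Function.invFun (gradient φ)
        (gradient φ (R x) - α • R (gradient g x)) - R x))
      ∧ Function.Bijective (fun x => x + J (Function.invFun (gradient φ)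
        (gradient φ (R x) - α • R (gradient g x)) - R x))
      ∧ ContDiff ℝ 1 (Function.invFun (fun x => x + J (Function.invFun (gradient φ)
        (gradient φ (R x) - α • R (gradient g x)) - R x)))) := by
  classical
  have hφd : Differentiable ℝ φ := hφ2.differentiable (by norm_num)
  have hgd : Differentiable ℝ g := hg.differentiable (by norm_num)
  have hGg : ContDiff ℝ 1 (gradient g) := bmd_contDiff_gradient hg
  have hm₂ : 0 < mφ - α * L := by linarith
  have hα0 : 0 ≤ α := hα.le
  have monoG : ∀ a b, mφ * ‖a - b‖ ^ 2
      ≤ ⟪gradient φ a - gradient φ b, a - b⟫_ℝ :=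
    fun a b => bmd_mono_of_strongConvex hφd hsc a b
  obtain ⟨hGc, Gbij, hGinvC1⟩ := bmd_gradient_package hmφ hφ2 monoG
  -- the parametrized family F c
  set F : X → Eb → Eb := fun c z =>
    gradient φ z - α • (R (gradient g (J z + (c - J (R c))))) with hF0
  have hFdef : ∀ c z, F c z
      = gradient φ z - α • (R (gradient g (J z + (c - J (R c))))) := fun c z => rfl
  have monoF : ∀ c a b, (mφ - α * L) * ‖a - b‖ ^ 2 ≤ ⟪F c a - F c b, a - b⟫_ℝ := by
    intro c a b
    rw [hFdef, hFdef]
    have e1 : gradient φ a - α • R (gradient g (J a + (c - J (R c))))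
        - (gradient φ b - α • R (gradient g (J b + (c - J (R c)))))
        = (gradient φ a - gradient φ b)
          - α • R (gradient g (J a + (c - J (R c))) - gradient g (J b + (c - J (R c)))) := by
      rw [map_sub, smul_sub]; abel
    rw [e1, inner_sub_left, real_inner_smul_left]
    set Δ := gradient g (J a + (c - J (R c))) - gradient g (J b + (c - J (R c))) with hΔ
    have h2 : |⟪R Δ, a - b⟫_ℝ| ≤ L * ‖a - b‖ ^ 2 := by
      have h3 := abs_real_inner_le_norm (R Δ) (a - b)
      have h4 : ‖R Δ‖ ≤ ‖Δ‖ := bmd_abs_R_nonexpansive J R hRJ hAdj Δ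
      have h5 : ‖Δ‖ ≤ L * ‖a - b‖ := by
        have h6 := hlipn (J a + (c - J (R c))) (J b + (c - J (R c)))
        have h7 : J a + (c - J (R c)) - (J b + (c - J (R c))) = J (a - b) := by
          rw [map_sub]; abel
        rw [h7, bmd_abs_J_norm J R hRJ hAdj] at h6
        exact h6
      calc |⟪R Δ, a - b⟫_ℝ| ≤ ‖R Δ‖ * ‖a - b‖ := h3
        _ ≤ (L * ‖a - b‖) * ‖a - b‖ :=
            mul_le_mul_of_nonneg_right (le_trans h4 h5) (norm_nonneg _)
        _ = L * ‖a - b‖ ^ 2 := by ring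
    have h8 := monoG a b
    have h9 : α * ⟪R Δ, a - b⟫_ℝ ≤ α * (L * ‖a - b‖ ^ 2) :=
      mul_le_mul_of_nonneg_left (le_trans (le_abs_self _) h2) hα0
    nlinarith [h8, h9]
  have hFgrad : ∀ c, F c = gradient (fun w => φ w - α * g (J w + (c - J (R c)))) := by
    intro c
    funext z
    have hg2d : DifferentiableAt ℝ (fun w : Eb => g (J w + (c - J (R c)))) z :=
      ((hgd _).hasFDerivAt.comp z (J.hasFDerivAt.add_const _)).differentiableAt
    rw [bmd_gradient_sub_smul (hφd z) hg2d α,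
      bmd_abs_gradient_comp J R hRJ hAdj hgd _ z, hFdef]
  have hhcd : ∀ c, Differentiable ℝ (fun w : Eb => φ w - α * g (J w + (c - J (R c)))) := by
    intro c
    exact hφd.sub ((hgd.comp (J.differentiable.add_const _)).const_mul α)
  have Finj : ∀ c, Function.Injective (F c) := by
    intro c a b hab
    have h1 := monoF c a b
    rw [hab, sub_self, inner_zero_left] at h1
    have h2 : ‖a - b‖ ^ 2 ≤ 0 := by nlinarith [h1]
    have h3 : ‖a - b‖ = 0 := by nlinarith [sq_nonneg ‖a - b‖, norm_nonneg (a - b)]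
    rwa [norm_sub_eq_zero_iff] at h3
  have Fsurj : ∀ c, Function.Surjective (F c) := by
    intro c
    rw [hFgrad c]
    apply bmd_surj_of_mono (hhcd c) hm₂
    intro a b
    have h1 := monoF c a b
    rw [hFgrad c] at h1
    exact h1
  -- the two factor maps
  set Θ : X → X := fun x =>
    x + J (gradient φ (R x) - α • R (gradient g x) - R x) with hΘ0
  have hΘdef : ∀ x, Θ x
      = x + J (gradient φ (R x) - α • R (gradient g x) - R x) := fun x => rfl
  set Ξ : X → X := fun y =>
    y + J (Function.invFun (gradient φ) (R y) - R y) with hΞ0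
  have hΞdef : ∀ y, Ξ y
      = y + J (Function.invFun (gradient φ) (R y) - R y) := fun y => rfl
  set Ξ' : X → X := fun y => y + J (gradient φ (R y) - R y) with hΞ'0
  have hΞ'def : ∀ y, Ξ' y = y + J (gradient φ (R y) - R y) := fun y => rfl
  set Θ' : X → X := fun y =>
    y + J (Function.invFun (F y) (R y) - R y) with hΘ'0
  have hΘ'def : ∀ y, Θ' y
      = y + J (Function.invFun (F y) (R y) - R y) := fun y => rfl
  -- computations
  have hRΘ : ∀ x, R (Θ x) = gradient φ (R x) - α • R (gradient g x) := by
    intro x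
    rw [hΘdef, map_add, hRJ]
    abel
  have hPΘ : ∀ x, Θ x - J (R (Θ x)) = x - J (R x) := by
    intro x
    rw [hRΘ x, hΘdef]
    simp only [map_sub]
    abel
  have hFΘ : ∀ x, F (Θ x) = F x := by
    intro x
    funext z
    rw [hFdef, hFdef, hPΘ x]
  have hFRx : ∀ x, F x (R x) = gradient φ (R x) - α • R (gradient g x) := by
    intro x
    rw [hFdef, show J (R x) + (x - J (R x)) = x from by abel]
  have hΘ'Θ : ∀ x, Θ' (Θ x) = x := by
    intro x
    rw [hΘ'def, hFΘ x, hRΘ x, ← hFRx x,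
      Function.leftInverse_invFun (Finj x) (R x), hFRx x, hΘdef]
    simp only [map_sub]
    abel
  have hΘΘ' : ∀ y, Θ (Θ' y) = y := by
    intro y
    set z₀ := Function.invFun (F y) (R y) with hz₀
    have hRΘ'y : R (Θ' y) = z₀ := by
      rw [hΘ'def, map_add, hRJ, ← hz₀]
      abel
    have hθ'y : Θ' y = J z₀ + (y - J (R y)) := by
      rw [hΘ'def, ← hz₀, map_sub]
      abel
    have hFz : gradient φ z₀ - α • R (gradient g (J z₀ + (y - J (R y)))) = R y := by
      have h1 := Function.rightInverse_invFun (Fsurj y) (R y)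
      rw [hFdef] at h1
      rw [← hz₀] at h1
      exact h1
    rw [hΘdef, hRΘ'y]
    rw [show gradient g (Θ' y) = gradient g (J z₀ + (y - J (R y))) from by rw [hθ'y]]
    rw [show gradient φ z₀ - α • R (gradient g (J z₀ + (y - J (R y)))) - z₀
      = R y - z₀ from by rw [hFz]]
    rw [hθ'y, map_sub]
    abel
  have hΞ'Ξ : ∀ y, Ξ' (Ξ y) = y := by
    intro y
    have hRΞ : R (Ξ y) = Function.invFun (gradient φ) (R y) := by
      rw [hΞdef, map_add, hRJ]
      abel
    rw [hΞ'def, hRΞ, Function.rightInverse_invFun Gbij.2 (R y), hΞdef]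
    simp only [map_sub]
    abel
  have hΞΞ' : ∀ y, Ξ (Ξ' y) = y := by
    intro y
    have hRΞ' : R (Ξ' y) = gradient φ (R y) := by
      rw [hΞ'def, map_add, hRJ]
      abel
    rw [hΞdef, hRΞ', Function.leftInverse_invFun Gbij.1 (R y), hΞ'def]
    simp only [map_sub]
    abel
  have hΘbij : Function.Bijective Θ :=
    ⟨Function.LeftInverse.injective hΘ'Θ, fun y => ⟨Θ' y, hΘΘ' y⟩⟩
  have hΞbij : Function.Bijective Ξ :=
    ⟨Function.LeftInverse.injective hΞ'Ξ, fun y => ⟨Ξ' y, hΞΞ' y⟩⟩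
  -- smoothness
  have hΘC1 : ContDiff ℝ 1 Θ := by
    rw [hΘ0]
    exact contDiff_id.add (J.contDiff.comp
      (((hGc.comp R.contDiff).sub ((R.contDiff.comp hGg).const_smul α)).sub R.contDiff))
  have hΞC1 : ContDiff ℝ 1 Ξ := by
    rw [hΞ0]
    exact contDiff_id.add (J.contDiff.comp
      ((hGinvC1.comp R.contDiff).sub R.contDiff))
  have hΞ'C1 : ContDiff ℝ 1 Ξ' := by
    rw [hΞ'0]
    exact contDiff_id.add (J.contDiff.comp
      ((hGc.comp R.contDiff).sub R.contDiff))
  -- the Jacobian of Θ is everywhere injective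
  have hDinj : ∀ x, Function.Injective (fderiv ℝ Θ x) := by
    intro x
    have hΘfd : HasFDerivAt Θ (fderiv ℝ Θ x) x := (hΘC1.differentiable one_ne_zero x).hasFDerivAt
    set D := fderiv ℝ Θ x with hD0
    set Pc : X →L[ℝ] X := ContinuousLinearMap.id ℝ X - J.comp R with hPc
    have hPcapp : ∀ v, Pc v = v - J (R v) := by
      intro v
      simp [hPc, ContinuousLinearMap.sub_apply]
    have hPcΘ : ⇑Pc ∘ Θ = ⇑Pc := by
      funext v
      simp only [Function.comp_apply, hPcapp]
      exact hPΘ v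
    have hPD : Pc.comp D = Pc := by
      have h1 : HasFDerivAt (⇑Pc ∘ Θ) (Pc.comp D) x := Pc.hasFDerivAt.comp x hΘfd
      rw [hPcΘ] at h1
      exact h1.unique Pc.hasFDerivAt
    have haff : HasFDerivAt (fun z : Eb => J z + (x - J (R x))) (J : Eb →L[ℝ] X) (R x) :=
      J.hasFDerivAt.add_const _
    have hRΘfd : HasFDerivAt (⇑R ∘ Θ) (R.comp D) x := R.hasFDerivAt.comp x hΘfd
    have hpt : J (R x) + (x - J (R x)) = x := by abel
    have hRΘfd' : HasFDerivAt (⇑R ∘ Θ) (R.comp D)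
        ((fun z : Eb => J z + (x - J (R x))) (R x)) := by
      simp only []
      rw [hpt]
      exact hRΘfd
    have hcomp : HasFDerivAt ((⇑R ∘ Θ) ∘ (fun z : Eb => J z + (x - J (R x))))
        ((R.comp D).comp (J : Eb →L[ℝ] X)) (R x) := hRΘfd'.comp (R x) haff
    have hFfun : (⇑R ∘ Θ) ∘ (fun z : Eb => J z + (x - J (R x))) = F x := by
      funext z
      simp only [Function.comp_apply]
      rw [hRΘ (J z + (x - J (R x))), hFdef]
      rw [show R (J z + (x - J (R x))) = z from by
        rw [map_add, map_sub, hRJ, hRJ]; abel]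
    rw [hFfun] at hcomp
    have hcoer := bmd_fderiv_coercive (monoF x) hcomp
    intro v v' hvv
    have hu : D (v - v') = 0 := by rw [map_sub, hvv, sub_self]
    set u := v - v' with hu0
    have hPu : Pc u = Pc (D u) := by
      have h1 := congrArg (fun T : X →L[ℝ] X => T u) hPD
      simp only [ContinuousLinearMap.comp_apply] at h1
      exact h1.symm
    rw [hu] at hPu
    rw [map_zero] at hPu
    have hJRu : u = J (R u) := by
      have h2 := hPcapp u
      rw [hPu] at h2
      have := sub_eq_zero.mp h2.symm
      exact this
    have hAu : ((R.comp D).comp (J : Eb →L[ℝ] X)) (R u) = 0 := by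
      simp only [ContinuousLinearMap.comp_apply]
      rw [← hJRu, hu, map_zero]
    have h3 := hcoer (R u)
    rw [hAu, inner_zero_left] at h3
    have h4 : ‖R u‖ ^ 2 ≤ 0 := by nlinarith [h3]
    have h5 : ‖R u‖ = 0 := by nlinarith [sq_nonneg ‖R u‖, norm_nonneg (R u)]
    have h6 : R u = 0 := norm_eq_zero.mp h5
    have h7 : u = 0 := by rw [hJRu, h6, map_zero]
    exact sub_eq_zero.mp h7
  have hΘinvC1 : ContDiff ℝ 1 (Function.invFun Θ) :=
    bmd_contDiff_invFun hΘC1 hΘbij fun x => bmd_equiv_of_injective (hDinj x)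
  -- assemble
  have hψeq : (fun x => x + J (Function.invFun (gradient φ)
      (gradient φ (R x) - α • R (gradient g x)) - R x)) = Ξ ∘ Θ := by
    funext x
    simp only [Function.comp_apply]
    rw [hΞdef, hRΘ x, hΘdef]
    simp only [map_sub]
    abel
  have hψbij : Function.Bijective (Ξ ∘ Θ) := hΞbij.comp hΘbij
  have hψC1 : ContDiff ℝ 1 (Ξ ∘ Θ) := hΞC1.comp hΘC1
  have hinvψ : Function.invFun (Ξ ∘ Θ) = Function.invFun Θ ∘ Ξ' := by
    funext y
    have hy : (Ξ ∘ Θ) (Function.invFun Θ (Ξ' y)) = y := by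
      simp only [Function.comp_apply]
      rw [Function.rightInverse_invFun hΘbij.2 (Ξ' y), hΞΞ' y]
    calc Function.invFun (Ξ ∘ Θ) y
        = Function.invFun (Ξ ∘ Θ) ((Ξ ∘ Θ) (Function.invFun Θ (Ξ' y))) := by rw [hy]
      _ = Function.invFun Θ (Ξ' y) := Function.leftInverse_invFun hψbij.1 _
  refine ⟨?_, ?_, ?_⟩
  · rw [hψeq]; exact hψC1
  · rw [hψeq]; exact hψbij
  · rw [hψeq, hinvψ]
    exact hΘinvC1.comp hΞ'C1

end AbstractBMD

section BridgeBMD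
open Filter Topology Function Set
open scoped InnerProductSpace

lemma bmd_restrictBlk_eq {n p : ℕ} (blk : Fin n → Fin p) (s : Fin p)
    (v : EuclideanSpace ℝ (Fin n)) : restrictBlk blk s v = bmdR blk s v := rfl

lemma bmd_step_eq {n p : ℕ} (f : EuclideanSpace ℝ (Fin n) → ℝ) (blk : Fin n → Fin p)
    (φ : ∀ s : Fin p, EuclideanSpace ℝ {i : Fin n // blk i = s} → ℝ) (α : ℝ) (s : Fin p)
    (x : EuclideanSpace ℝ (Fin n)) :
    bmdStep f blk φ α s x = x + bmdJ blk s
      (Function.invFun (gradient (φ s))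
        (gradient (φ s) (bmdR blk s x) - α • bmdR blk s (gradient f x)) - bmdR blk s x) := by
  ext i
  by_cases h : blk i = s
  · simp only [bmdStep, bmd_restrictBlk_eq, WithLp.equiv_symm_apply, PiLp.toLp_apply, h, dif_pos,
      PiLp.add_apply, bmdJ_apply, PiLp.sub_apply, bmdR_apply]
    ring
  · simp only [bmdStep, bmd_restrictBlk_eq, WithLp.equiv_symm_apply, PiLp.toLp_apply, h, dif_neg,
      not_false_iff, PiLp.add_apply, bmdJ_apply, PiLp.sub_apply, bmdR_apply]
    simp [h]


end BridgeBMD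

/-- each block mirror descent map `ψ_s` is a diffeomorphism of ℝⁿ. -/
theorem bmdStep_isDiffeomorphism
    {n p : ℕ} (hp : 0 < p) (blk : Fin n → Fin p)
    (hmono : Monotone blk) (hsurj : Function.Surjective blk)
    (f : EuclideanSpace ℝ (Fin n) → ℝ) (hf : ContDiff ℝ 2 f)
    (L : ℝ) (hL : 0 < L) (hlip : LipschitzWith (Real.toNNReal L) (gradient f))
    (φ : ∀ s : Fin p, EuclideanSpace ℝ {i : Fin n // blk i = s} → ℝ)
    (hφ : ∀ s, ContDiff ℝ 2 (φ s))
    (μs : Fin p → ℝ) (hμs : ∀ s, 0 < μs s)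
    (hstrong : ∀ s, StrongConvexOn Set.univ (μs s) (φ s))
    (μ : ℝ) (hμ : ∀ s, μ ≤ μs s)
    (α : ℝ) (hα : 0 < α) (hα' : α < μ / L) :
    ∀ s : Fin p, IsDiffeomorphism (bmdStep f blk φ α s) := by
  intro s
  classical
  have hψ : bmdStep f blk φ α s = fun x => x + bmdJ blk s
      (Function.invFun (gradient (φ s))
        (gradient (φ s) (bmdR blk s x) - α • bmdR blk s (gradient f x)) - bmdR blk s x) :=
    funext fun x => bmd_step_eq f blk φ α s x
  have hαL : α * L < μ := (lt_div_iff₀ hL).mp hα'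
  have hαLs : α * L < μs s := lt_of_lt_of_le hαL (hμ s)
  have hlipn : ∀ u v : EuclideanSpace ℝ (Fin n),
      ‖gradient f u - gradient f v‖ ≤ L * ‖u - v‖ := by
    intro u v
    have h1 := hlip.dist_le_mul u v
    rwa [dist_eq_norm, dist_eq_norm, Real.coe_toNNReal _ hL.le] at h1
  have key := bmd_abstract (bmdJ blk s) (bmdR blk s) (bmdRJ blk s) (bmd_adj blk s)
    hf hL hlipn (hφ s) (hμs s) (hstrong s) hα hαLs
  rw [IsDiffeomorphism, hψ]
  exact key

end
end

section
/- Let B ∈ ℝ^{n×n} be symmetric with spectral radius ρ(B), and let B̌ and B̂ be its strictly block lower and strictly block upper triangular parts with respect to the given block partition. Then for every vector η ∈ ℂⁿ with ‖η‖ = 1, both −ρ(B) ≤ Re(η^H B̌ η) ≤ ρ(B) and −ρ(B) ≤ Re(η^H B̂ η) ≤ ρ(B) hold, where η^H denotes the conjugate transpose. -/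
open Matrix MeasureTheory Filter Topology

noncomputable section

namespace SpecRadAux

lemma eigset_bddAbove {ι : Type*} [Fintype ι] (M : Matrix ι ι ℝ) :
    BddAbove {r : ℝ | ∃ z : ℂ, IsEigenvalue M z ∧ r = ‖z‖} := by
  classical
  use ∑ i, ∑ j, |M i j|
  rintro r ⟨z, ⟨v, hv, hMv⟩, rfl⟩
  obtain ⟨i, -, hi⟩ := Finset.exists_max_image Finset.univ (fun i => ‖v i‖)
    (Finset.univ_nonempty_iff.2 (by
      by_contra h
      rw [not_isEmpty_iff.symm, not_not] at h
      exact hv (funext fun i => (h.elim i))))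
  have hvi : 0 < ‖v i‖ := by
    rcases (Function.ne_iff).1 hv with ⟨j, hj⟩
    exact lt_of_lt_of_le (by simpa using hj) (hi j (Finset.mem_univ j))
  have key : ‖z‖ * ‖v i‖ ≤ (∑ j, |M i j|) * ‖v i‖ := by
    have h1 : (z • v) i = ∑ j, (M i j : ℂ) * v j := by
      rw [← hMv]; simp [Matrix.mulVec, dotProduct, Matrix.map_apply]
    have : ‖z * v i‖ ≤ ∑ j, |M i j| * ‖v i‖ := by
      have := congrArg norm h1
      simp only [Pi.smul_apply, smul_eq_mul] at this
      rw [this]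
      refine le_trans (norm_sum_le _ _) ?_
      refine Finset.sum_le_sum fun j _ => ?_
      rw [norm_mul, Complex.norm_real, Real.norm_eq_abs]
      exact mul_le_mul_of_nonneg_left (hi j (Finset.mem_univ j)) (abs_nonneg _)
    simpa [norm_mul, Finset.sum_mul] using this
  have hle : ‖z‖ ≤ ∑ j, |M i j| := le_of_mul_le_mul_right key hvi
  refine hle.trans ?_
  exact Finset.single_le_sum (f := fun i => ∑ j, |M i j|)
    (fun i _ => Finset.sum_nonneg fun j _ => abs_nonneg _) (Finset.mem_univ i)

lemma specRad_nonneg {ι : Type*} [Fintype ι] (M : Matrix ι ι ℝ) : 0 ≤ specRad M := by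
  rcases Set.eq_empty_or_nonempty {r : ℝ | ∃ z : ℂ, IsEigenvalue M z ∧ r = ‖z‖} with h | h
  · rw [specRad, h, Real.sSup_empty]
  · obtain ⟨r, hr⟩ := h
    have h0 : 0 ≤ r := by obtain ⟨z, -, rfl⟩ := hr; positivity
    exact h0.trans (le_csSup (eigset_bddAbove M) hr)

lemma abs_eigenvalue_le {ι : Type*} [Fintype ι] (M : Matrix ι ι ℝ) {c : ℝ} {v : ι → ℝ}
    (hv : v ≠ 0) (h : M.mulVec v = c • v) : |c| ≤ specRad M := by
  have : IsEigenvalue M (c : ℂ) := by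
    refine ⟨fun i => (v i : ℂ), ?_, ?_⟩
    · intro hz
      apply hv
      funext i
      have := congrFun hz i
      simpa using this
    · funext i
      have := congrFun h i
      simp only [Matrix.mulVec, dotProduct, Matrix.map_apply, Pi.smul_apply,
        smul_eq_mul] at this ⊢
      push_cast
      exact_mod_cast congrArg Complex.ofReal this
  have : |c| ∈ {r : ℝ | ∃ z : ℂ, IsEigenvalue M z ∧ r = ‖z‖} :=
    ⟨(c : ℂ), this, by simp⟩
  exact le_csSup (eigset_bddAbove M) this

lemma isHermitian_of_isSymm {n : ℕ} {A : Matrix (Fin n) (Fin n) ℝ} (hA : A.IsSymm) :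
    A.IsHermitian := by
  rw [Matrix.IsHermitian, Matrix.conjTranspose]
  simpa [Matrix.map, Matrix.IsSymm, Matrix.transpose] using hA

lemma quad_abs_le_specRad {n : ℕ} (A : Matrix (Fin n) (Fin n) ℝ) (hA : A.IsSymm)
    (v : Fin n → ℝ) : |v ⬝ᵥ A *ᵥ v| ≤ specRad A * (v ⬝ᵥ v) := by
  classical
  have hH : A.IsHermitian := isHermitian_of_isSymm hA
  set U : Matrix (Fin n) (Fin n) ℝ := (hH.eigenvectorUnitary : Matrix (Fin n) (Fin n) ℝ) with hU
  set w : Fin n → ℝ := star U *ᵥ v with hw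
  have hUU : U * star U = 1 := Matrix.mem_unitaryGroup_iff.mp hH.eigenvectorUnitary.2
  have hform : v ⬝ᵥ A *ᵥ v = ∑ i, hH.eigenvalues i * (w i * w i) := by
    conv_lhs => rw [hH.spectral_theorem, Unitary.conjStarAlgAut_apply]
    rw [← Matrix.mulVec_mulVec, ← Matrix.mulVec_mulVec, Matrix.dotProduct_mulVec,
      ← Matrix.mulVec_transpose]
    have hUt : Uᵀ = star U := by
      simp [Matrix.star_eq_conjTranspose, Matrix.conjTranspose, Matrix.map]; rfl
    rw [hUt, ← hw]
    simp [Matrix.mulVec_diagonal, dotProduct, mul_comm, mul_assoc, mul_left_comm]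
  have hnorm : v ⬝ᵥ v = ∑ i, w i * w i := by
    have : v ⬝ᵥ (U * star U) *ᵥ v = v ⬝ᵥ v := by rw [hUU]; simp [Matrix.one_mulVec]
    rw [← this, ← Matrix.mulVec_mulVec, Matrix.dotProduct_mulVec, ← Matrix.mulVec_transpose]
    have hUt : Uᵀ = star U := by
      simp [Matrix.star_eq_conjTranspose, Matrix.conjTranspose, Matrix.map]; rfl
    rw [hUt, ← hw]
    rfl
  have heig : ∀ i, |hH.eigenvalues i| ≤ specRad A := fun i =>
    abs_eigenvalue_le A (by simpa using hH.eigenvectorBasis.orthonormal.ne_zero i)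
      (hH.mulVec_eigenvectorBasis i)
  rw [hform, hnorm]
  calc |∑ i, hH.eigenvalues i * (w i * w i)| ≤ ∑ i, |hH.eigenvalues i * (w i * w i)| :=
        Finset.abs_sum_le_sum_abs _ _
    _ ≤ ∑ i, specRad A * (w i * w i) := by
        refine Finset.sum_le_sum fun i _ => ?_
        rw [abs_mul, abs_of_nonneg (mul_self_nonneg (w i))]
        exact mul_le_mul_of_nonneg_right (heig i) (mul_self_nonneg _)
    _ = specRad A * ∑ i, w i * w i := by rw [Finset.mul_sum]

def diagBlockPart {n p : ℕ} (blk : Fin n → Fin p) (A : Matrix (Fin n) (Fin n) ℝ) :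
    Matrix (Fin n) (Fin n) ℝ :=
  Matrix.of fun i j => if blk i = blk j then A i j else 0

lemma upper_eq_lower_transpose {n p : ℕ} (blk : Fin n → Fin p) {B : Matrix (Fin n) (Fin n) ℝ}
    (hB : B.IsSymm) : upperBlockPart blk B = (lowerBlockPart blk B)ᵀ := by
  funext i j
  have hBij : B j i = B i j := by
    have := congrFun (congrFun hB i) j
    simpa [Matrix.transpose_apply] using this
  simp [upperBlockPart, lowerBlockPart, Matrix.transpose_apply, hBij]

lemma quad_upper_eq_lower {n p : ℕ} (blk : Fin n → Fin p) {B : Matrix (Fin n) (Fin n) ℝ}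
    (hB : B.IsSymm) (x : Fin n → ℝ) :
    x ⬝ᵥ (upperBlockPart blk B) *ᵥ x = x ⬝ᵥ (lowerBlockPart blk B) *ᵥ x := by
  rw [upper_eq_lower_transpose blk hB, Matrix.mulVec_transpose, dotProduct_comm,
    ← Matrix.dotProduct_mulVec]

lemma block_decomp {n p : ℕ} (blk : Fin n → Fin p) (B : Matrix (Fin n) (Fin n) ℝ) :
    lowerBlockPart blk B + upperBlockPart blk B + diagBlockPart blk B = B := by
  funext i j
  simp only [Matrix.add_apply, lowerBlockPart, upperBlockPart, diagBlockPart, Matrix.of_apply]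
  rcases lt_trichotomy (blk i) (blk j) with h | h | h
  · simp [h, not_lt_of_gt h, ne_of_lt h]
  · simp [h, lt_irrefl]
  · simp [h, not_lt_of_gt h, (ne_of_lt h).symm]

lemma quad_diag_eq_sum {n p : ℕ} (blk : Fin n → Fin p) (B : Matrix (Fin n) (Fin n) ℝ)
    (x : Fin n → ℝ) :
    x ⬝ᵥ (diagBlockPart blk B) *ᵥ x =
      ∑ s : Fin p, (fun i => if blk i = s then x i else 0) ⬝ᵥ
        B *ᵥ (fun i => if blk i = s then x i else 0) := by
  have key : ∀ i j, x i * ((if blk i = blk j then B i j else 0) * x j)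
      = ∑ s : Fin p, (if blk i = s then x i else 0) * (B i j * (if blk j = s then x j else 0)) := by
    intro i j
    rw [Finset.sum_eq_single (blk i)
      (fun s _ hs => by simp [Ne.symm hs])
      (fun h => absurd (Finset.mem_univ _) h)]
    by_cases h : blk i = blk j
    · simp [h]
    · rw [if_neg h, if_neg fun hh : blk j = blk i => h hh.symm]
      ring
  simp only [dotProduct, Matrix.mulVec, diagBlockPart, Matrix.of_apply, Finset.mul_sum]
  conv_rhs => rw [Finset.sum_comm]
  refine Finset.sum_congr rfl fun i _ => ?_
  conv_rhs => rw [Finset.sum_comm]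
  exact Finset.sum_congr rfl fun j _ => key i j

lemma sum_block_norms {n p : ℕ} (blk : Fin n → Fin p) (x : Fin n → ℝ) :
    ∑ s : Fin p, (fun i => if blk i = s then x i else 0) ⬝ᵥ
        (fun i => if blk i = s then x i else 0) = x ⬝ᵥ x := by
  simp only [dotProduct]
  rw [Finset.sum_comm]
  refine Finset.sum_congr rfl fun i _ => ?_
  rw [Finset.sum_eq_single (blk i)
    (fun s _ hs => by simp [Ne.symm hs])
    (fun h => absurd (Finset.mem_univ _) h)]
  simp

lemma quad_lower_bound {n p : ℕ} (blk : Fin n → Fin p) {B : Matrix (Fin n) (Fin n) ℝ}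
    (hB : B.IsSymm) (x : Fin n → ℝ) :
    |x ⬝ᵥ (lowerBlockPart blk B) *ᵥ x| ≤ specRad B * (x ⬝ᵥ x) := by
  have h2 : 2 * (x ⬝ᵥ (lowerBlockPart blk B) *ᵥ x)
      = x ⬝ᵥ B *ᵥ x - x ⬝ᵥ (diagBlockPart blk B) *ᵥ x := by
    have := congrArg (fun M : Matrix (Fin n) (Fin n) ℝ => x ⬝ᵥ M *ᵥ x) (block_decomp blk B)
    simp only [Matrix.add_mulVec, dotProduct_add] at this
    rw [quad_upper_eq_lower blk hB] at this
    linarith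
  have hD : |x ⬝ᵥ (diagBlockPart blk B) *ᵥ x| ≤ specRad B * (x ⬝ᵥ x) := by
    rw [quad_diag_eq_sum]
    calc |∑ s : Fin p, (fun i => if blk i = s then x i else 0) ⬝ᵥ
            B *ᵥ (fun i => if blk i = s then x i else 0)|
        ≤ ∑ s : Fin p, |(fun i => if blk i = s then x i else 0) ⬝ᵥ
            B *ᵥ (fun i => if blk i = s then x i else 0)| := Finset.abs_sum_le_sum_abs _ _
      _ ≤ ∑ s : Fin p, specRad B * ((fun i => if blk i = s then x i else 0) ⬝ᵥ
            (fun i => if blk i = s then x i else 0)) :=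
          Finset.sum_le_sum fun s _ => quad_abs_le_specRad B hB _
      _ = specRad B * (x ⬝ᵥ x) := by rw [← Finset.mul_sum, sum_block_norms]
  have hBq : |x ⬝ᵥ B *ᵥ x| ≤ specRad B * (x ⬝ᵥ x) := quad_abs_le_specRad B hB x
  have habs : |2 * (x ⬝ᵥ (lowerBlockPart blk B) *ᵥ x)| ≤ 2 * (specRad B * (x ⬝ᵥ x)) := by
    rw [h2, sub_eq_add_neg]
    calc |x ⬝ᵥ B *ᵥ x + -(x ⬝ᵥ (diagBlockPart blk B) *ᵥ x)|
        ≤ |x ⬝ᵥ B *ᵥ x| + |-(x ⬝ᵥ (diagBlockPart blk B) *ᵥ x)| := abs_add_le _ _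
      _ ≤ 2 * (specRad B * (x ⬝ᵥ x)) := by rw [abs_neg]; linarith
  rw [abs_mul, abs_of_pos (by norm_num : (0:ℝ) < 2)] at habs
  linarith

lemma re_quad {n : ℕ} (M : Matrix (Fin n) (Fin n) ℝ) (η : Fin n → ℂ) :
    (star η ⬝ᵥ (M.map Complex.ofReal) *ᵥ η).re
      = (fun i => (η i).re) ⬝ᵥ M *ᵥ (fun i => (η i).re)
        + (fun i => (η i).im) ⬝ᵥ M *ᵥ (fun i => (η i).im) := by
  simp only [dotProduct, Matrix.mulVec, Matrix.map_apply, Pi.star_apply,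
    Finset.mul_sum, Complex.re_sum]
  rw [← Finset.sum_add_distrib]
  refine Finset.sum_congr rfl fun i _ => ?_
  rw [← Finset.sum_add_distrib]
  refine Finset.sum_congr rfl fun j _ => ?_
  simp only [Complex.mul_re, Complex.mul_im, Complex.conj_re, Complex.conj_im,
    Complex.ofReal_re, Complex.ofReal_im, RCLike.star_def]
  ring

end SpecRadAux

/-- for any unit vector `η ∈ ℂⁿ`, the real parts of `η^H B̌ η` and
`η^H B̂ η` are bounded in absolute value by the spectral radius of `B`. -/
theorem re_quadratic_form_triangular_parts_bounded
    {n p : ℕ} (hp : 0 < p) (blk : Fin n → Fin p)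
    (hmono : Monotone blk) (hsurj : Function.Surjective blk)
    (B : Matrix (Fin n) (Fin n) ℝ) (hB : B.IsSymm)
    (η : Fin n → ℂ) (hη : ∑ i, ‖η i‖ ^ 2 = 1) :
    (-specRad B ≤ (star η ⬝ᵥ ((lowerBlockPart blk B).map Complex.ofReal).mulVec η).re ∧
        (star η ⬝ᵥ ((lowerBlockPart blk B).map Complex.ofReal).mulVec η).re ≤ specRad B) ∧
      (-specRad B ≤ (star η ⬝ᵥ ((upperBlockPart blk B).map Complex.ofReal).mulVec η).re ∧
        (star η ⬝ᵥ ((upperBlockPart blk B).map Complex.ofReal).mulVec η).re ≤ specRad B) := by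
  classical
  set a : Fin n → ℝ := fun i => (η i).re with ha
  set b : Fin n → ℝ := fun i => (η i).im with hb
  have hab : a ⬝ᵥ a + b ⬝ᵥ b = 1 := by
    rw [← hη, dotProduct, dotProduct, ← Finset.sum_add_distrib]
    refine Finset.sum_congr rfl fun i _ => ?_
    rw [Complex.sq_norm, Complex.normSq_apply]
  have key : ∀ M : Matrix (Fin n) (Fin n) ℝ,
      (∀ x : Fin n → ℝ, |x ⬝ᵥ M *ᵥ x| ≤ specRad B * (x ⬝ᵥ x)) →
      |(star η ⬝ᵥ (M.map Complex.ofReal).mulVec η).re| ≤ specRad B := by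
    intro M hM
    rw [SpecRadAux.re_quad]
    have h1 := abs_le.mp (hM a)
    have h2 := abs_le.mp (hM b)
    rw [abs_le]
    constructor <;> nlinarith [h1.1, h1.2, h2.1, h2.2]
  have hlow := key (lowerBlockPart blk B) (fun x => SpecRadAux.quad_lower_bound blk hB x)
  have hup : |(star η ⬝ᵥ ((upperBlockPart blk B).map Complex.ofReal).mulVec η).re|
      ≤ specRad B := by
    refine key (upperBlockPart blk B) (fun x => ?_)
    rw [SpecRadAux.quad_upper_eq_lower blk hB x]
    exact SpecRadAux.quad_lower_bound blk hB x
  exact ⟨⟨(abs_le.mp hlow).1, (abs_le.mp hlow).2⟩, ⟨(abs_le.mp hup).1, (abs_le.mp hup).2⟩⟩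

end
end

section
/- Let B ∈ ℝ^{n×n} be symmetric and invertible, with spectral radius ρ(B), and let B̌ be its strictly block lower triangular part. Then for every β ∈ (0, 1/ρ(B)) and every t ∈ [0, 1], every (complex) eigenvalue λ of the matrix B^{-1}(I_n + tβ B̌) satisfies Re(λ) ≠ 0. -/
open Matrix MeasureTheory Filter Topology

noncomputable section

namespace SpecAux

lemma map_mul' {m : ℕ} (X Y : Matrix (Fin m) (Fin m) ℝ) :
    (X * Y).map Complex.ofReal = X.map Complex.ofReal * Y.map Complex.ofReal := by
  ext i j
  simp [Matrix.map_apply, Matrix.mul_apply]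

lemma map_one' {m : ℕ} :
    ((1 : Matrix (Fin m) (Fin m) ℝ)).map Complex.ofReal = 1 := by
  ext i j
  simp [Matrix.map_apply, Matrix.one_apply, apply_ite Complex.ofReal]

lemma isHermitian_map {m : ℕ} {B : Matrix (Fin m) (Fin m) ℝ} (hB : B.IsSymm) :
    (B.map Complex.ofReal).IsHermitian := by
  ext i j
  simp only [Matrix.conjTranspose_apply, Matrix.map_apply, RCLike.star_def, Complex.conj_ofReal]
  exact_mod_cast congrFun (congrFun hB i) j

lemma bddAbove_eig {m : ℕ} (M : Matrix (Fin m) (Fin m) ℝ) :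
    BddAbove {r : ℝ | ∃ z : ℂ, IsEigenvalue M z ∧ r = ‖z‖} := by
  refine ⟨∑ i, ∑ j, |M i j|, ?_⟩
  rintro r ⟨z, ⟨v, hv, hev⟩, rfl⟩
  obtain ⟨j0, hj0⟩ := Function.ne_iff.mp hv
  obtain ⟨i0, -, hi0⟩ := Finset.exists_max_image Finset.univ
    (fun i => ‖v i‖) ⟨j0, Finset.mem_univ _⟩
  have hvi0 : 0 < ‖v i0‖ :=
    lt_of_lt_of_le (by simpa using hj0) (hi0 j0 (Finset.mem_univ _))
  have h1 : ‖z‖ * ‖v i0‖ ≤ (∑ i, ∑ j, |M i j|) * ‖v i0‖ := by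
    have := congrFun hev i0
    simp only [Matrix.mulVec, dotProduct, Pi.smul_apply, smul_eq_mul,
      Matrix.map_apply] at this
    calc ‖z‖ * ‖v i0‖ = ‖z * v i0‖ := (norm_mul _ _).symm
      _ = ‖∑ j, (M i0 j : ℂ) * v j‖ := by rw [← this]
      _ ≤ ∑ j, ‖(M i0 j : ℂ) * v j‖ := by
          exact norm_sum_le _ _
      _ ≤ ∑ j, |M i0 j| * ‖v i0‖ := by
          refine Finset.sum_le_sum fun j _ => ?_
          rw [norm_mul, Complex.norm_real, Real.norm_eq_abs]
          exact mul_le_mul_of_nonneg_left (hi0 j (Finset.mem_univ _)) (abs_nonneg _)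
      _ = (∑ j, |M i0 j|) * ‖v i0‖ := by rw [Finset.sum_mul]
      _ ≤ (∑ i, ∑ j, |M i j|) * ‖v i0‖ := by
          refine mul_le_mul_of_nonneg_right ?_ (le_of_lt hvi0)
          exact Finset.single_le_sum (f := fun i => ∑ j, |M i j|)
            (fun i _ => Finset.sum_nonneg fun j _ => abs_nonneg _) (Finset.mem_univ i0)
  exact le_of_mul_le_mul_right h1 hvi0


lemma quad_eq {m : ℕ} {A : Matrix (Fin m) (Fin m) ℂ} (hA : A.IsHermitian) (v : Fin m → ℂ) :
    star v ⬝ᵥ A *ᵥ v =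
      ∑ i, (hA.eigenvalues i : ℂ) *
        Complex.normSq ((star (hA.eigenvectorUnitary : Matrix (Fin m) (Fin m) ℂ) *ᵥ v) i) := by
  set U : Matrix (Fin m) (Fin m) ℂ := (hA.eigenvectorUnitary : Matrix (Fin m) (Fin m) ℂ) with hU
  set w : Fin m → ℂ := star U *ᵥ v with hw
  have key : ∀ x, star v ⬝ᵥ (U *ᵥ x) = star w ⬝ᵥ x := by
    intro x
    rw [dotProduct_mulVec, hw, star_mulVec, Matrix.star_eq_conjTranspose,
      conjTranspose_conjTranspose]
  conv_lhs => rw [hA.spectral_theorem, Unitary.conjStarAlgAut_apply]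
  rw [← Matrix.mulVec_mulVec, ← Matrix.mulVec_mulVec, key]
  refine Finset.sum_congr rfl fun i _ => ?_
  simp only [Pi.star_apply, mulVec_diagonal, Function.comp_apply]
  rw [Complex.normSq_eq_conj_mul_self]
  simp only [Complex.star_def]
  push_cast
  have hwi : (star (hA.eigenvectorUnitary : Matrix (Fin m) (Fin m) ℂ) *ᵥ v) i = w i := rfl
  have hc : (RCLike.ofReal (hA.eigenvalues i) : ℂ) = ((hA.eigenvalues i : ℝ) : ℂ) := rfl
  rw [hwi, hc]
  ring

lemma normsq_eq {m : ℕ} {A : Matrix (Fin m) (Fin m) ℂ} (hA : A.IsHermitian) (v : Fin m → ℂ) :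
    ∑ i, Complex.normSq ((star (hA.eigenvectorUnitary : Matrix (Fin m) (Fin m) ℂ) *ᵥ v) i)
      = ∑ i, Complex.normSq (v i) := by
  set U : Matrix (Fin m) (Fin m) ℂ := (hA.eigenvectorUnitary : Matrix (Fin m) (Fin m) ℂ) with hU
  set w : Fin m → ℂ := star U *ᵥ v with hw
  have hUU : U * star U = 1 := Matrix.mem_unitaryGroup_iff.mp hA.eigenvectorUnitary.2
  have key : star v ⬝ᵥ (U *ᵥ w) = star w ⬝ᵥ w := by
    rw [dotProduct_mulVec, hw, star_mulVec, Matrix.star_eq_conjTranspose,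
      conjTranspose_conjTranspose]
  rw [hw, Matrix.mulVec_mulVec, hUU, one_mulVec] at key
  have h2 : ∀ x : Fin m → ℂ, star x ⬝ᵥ x = ((∑ i, Complex.normSq (x i) : ℝ) : ℂ) := by
    intro x
    push_cast
    simp only [dotProduct, Pi.star_apply, Complex.normSq_eq_conj_mul_self, Complex.star_def]
  have := (h2 v) ▸ (h2 w) ▸ key
  exact_mod_cast this.symm

lemma quad_bound {m : ℕ} {A : Matrix (Fin m) (Fin m) ℂ} (hA : A.IsHermitian)
    {ρ : ℝ} (hρ : ∀ i, |hA.eigenvalues i| ≤ ρ) (v : Fin m → ℂ) :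
    ‖star v ⬝ᵥ A *ᵥ v‖ ≤ ρ * ∑ i, Complex.normSq (v i) := by
  rw [quad_eq hA v, ← normsq_eq hA v]
  set w : Fin m → ℂ := star (hA.eigenvectorUnitary : Matrix (Fin m) (Fin m) ℂ) *ᵥ v
  calc ‖∑ i, (hA.eigenvalues i : ℂ) * (Complex.normSq (w i) : ℂ)‖
      ≤ ∑ i, ‖(hA.eigenvalues i : ℂ) * (Complex.normSq (w i) : ℂ)‖ :=
        norm_sum_le _ _
    _ ≤ ∑ i, ρ * Complex.normSq (w i) := by
        refine Finset.sum_le_sum fun i _ => ?_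
        rw [norm_mul, Complex.norm_real, Complex.norm_real, Real.norm_eq_abs, Real.norm_eq_abs,
          abs_of_nonneg (Complex.normSq_nonneg _)]
        exact mul_le_mul_of_nonneg_right (hρ i) (Complex.normSq_nonneg _)
    _ = ρ * ∑ i, Complex.normSq (w i) := (Finset.mul_sum _ _ _).symm


lemma conj_quad {m : ℕ} (X : Matrix (Fin m) (Fin m) ℝ) (v : Fin m → ℂ) :
    (starRingEnd ℂ) (star v ⬝ᵥ (X.map Complex.ofReal *ᵥ v)) =
      star v ⬝ᵥ ((Xᵀ).map Complex.ofReal *ᵥ v) := by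
  simp only [dotProduct, mulVec, Pi.star_apply, map_sum, _root_.map_mul, Complex.conj_ofReal,
    Complex.conj_conj, Matrix.map_apply, Matrix.transpose_apply, Finset.mul_sum,
    Complex.star_def]
  rw [Finset.sum_comm]
  refine Finset.sum_congr rfl fun i _ => Finset.sum_congr rfl fun j _ => by ring

lemma sum_blocks_quad {m q : ℕ} (blk : Fin m → Fin q) (B : Matrix (Fin m) (Fin m) ℝ)
    (v : Fin m → ℂ) :
    star v ⬝ᵥ ((Matrix.of fun i j => if blk i = blk j then B i j else 0).map
        Complex.ofReal *ᵥ v)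
      = ∑ s, star (fun i => if blk i = s then v i else 0) ⬝ᵥ
          (B.map Complex.ofReal *ᵥ (fun i => if blk i = s then v i else 0)) := by
  simp only [dotProduct, mulVec, Pi.star_apply, Matrix.map_apply, Matrix.of_apply,
    Finset.mul_sum]
  symm
  rw [Finset.sum_comm]
  refine Finset.sum_congr rfl fun i _ => ?_
  rw [Finset.sum_comm]
  refine Finset.sum_congr rfl fun j _ => ?_
  by_cases h : blk i = blk j
  · simp [h, Finset.sum_ite_eq, apply_ite (starRingEnd ℂ)]
  · simp [h, Finset.sum_ite_eq, apply_ite (starRingEnd ℂ)]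


end SpecAux

/-- for invertible symmetric `B`, `β ∈ (0, 1/ρ(B))` and `t ∈ [0,1]`, every
complex eigenvalue of `B⁻¹(I + tβ B̌)` has nonzero real part. -/
theorem eigenvalue_re_ne_zero_of_inv_mul_one_add_lower
    {n p : ℕ} (hp : 0 < p) (blk : Fin n → Fin p)
    (hmono : Monotone blk) (hsurj : Function.Surjective blk)
    (B : Matrix (Fin n) (Fin n) ℝ) (hB : B.IsSymm) (hBunit : IsUnit B)
    (β t : ℝ) (hβ0 : 0 < β) (hβ1 : β < 1 / specRad B) (ht0 : 0 ≤ t) (ht1 : t ≤ 1)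
    (z : ℂ)
    (hz : IsEigenvalue (B⁻¹ * ((1 : Matrix (Fin n) (Fin n) ℝ) +
      (t * β) • lowerBlockPart blk B)) z) :
    z.re ≠ 0 := by
  intro hre
  obtain ⟨v, hv, hev⟩ := hz
  classical
  set ρ := specRad B with hρdef
  have hρpos : 0 < ρ := by
    by_contra h
    push_neg at h
    have h1 : 1 / ρ ≤ 0 := by
      rcases lt_or_eq_of_le h with h' | h'
      · exact le_of_lt (div_neg_of_pos_of_neg one_pos h')
      · rw [h']; norm_num
    linarith
  have hβρ : β * ρ < 1 := (lt_div_iff₀ hρpos).mp hβ1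
  set A := B.map Complex.ofReal with hAdef
  have hAH : A.IsHermitian := SpecAux.isHermitian_map hB
  have heig : ∀ i, |hAH.eigenvalues i| ≤ ρ := by
    intro i
    refine le_csSup (SpecAux.bddAbove_eig B) ?_
    refine ⟨(hAH.eigenvalues i : ℂ), ⟨⇑(hAH.eigenvectorBasis i), ?_, ?_⟩, ?_⟩
    · have hne := hAH.eigenvectorBasis.orthonormal.ne_zero i
      intro hcontra
      apply hne
      ext j
      exact congrFun hcontra j
    · rw [← hAdef, hAH.mulVec_eigenvectorBasis i]
      ext j
      simp [Complex.real_smul]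
    · rw [Complex.norm_real, Real.norm_eq_abs]
  set c := t * β with hc
  have hc0 : 0 ≤ c := mul_nonneg ht0 (le_of_lt hβ0)
  have hcβ : c ≤ β := by nlinarith
  have hBdet : IsUnit B.det := (Matrix.isUnit_iff_isUnit_det B).mp hBunit
  set L := lowerBlockPart blk B with hLdef
  set D : Matrix (Fin n) (Fin n) ℝ :=
    Matrix.of (fun i j => if blk i = blk j then B i j else 0) with hDdef
  -- key vector identity
  have h1 : ((1 + c • L).map Complex.ofReal) *ᵥ v = z • (A *ᵥ v) := by
    have h2 := congrArg (fun w => A *ᵥ w) hev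
    simp only [Matrix.mulVec_mulVec] at h2
    have h3 : A * (B⁻¹ * ((1 : Matrix (Fin n) (Fin n) ℝ) + c • L)).map Complex.ofReal
        = ((1 : Matrix (Fin n) (Fin n) ℝ) + c • L).map Complex.ofReal := by
      rw [hAdef, ← SpecAux.map_mul', ← Matrix.mul_assoc, Matrix.mul_nonsing_inv B hBdet,
        Matrix.one_mul]
    rw [h3] at h2
    rw [h2, Matrix.mulVec_smul]
  have hmapadd : ((1 : Matrix (Fin n) (Fin n) ℝ) + c • L).map Complex.ofReal
      = 1 + (c : ℂ) • L.map Complex.ofReal := by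
    ext i j
    by_cases h : i = j <;>
      simp [Matrix.map_apply, Matrix.one_apply, h, smul_eq_mul]
  set S : ℝ := ∑ i, Complex.normSq (v i) with hSdef
  have hS0 : 0 < S := by
    obtain ⟨j0, hj0⟩ := Function.ne_iff.mp hv
    refine Finset.sum_pos' (fun i _ => Complex.normSq_nonneg _) ⟨j0, Finset.mem_univ _, ?_⟩
    simpa [Complex.normSq_pos] using hj0
  have hdotself : star v ⬝ᵥ v = (S : ℂ) := by
    rw [hSdef]
    push_cast
    simp only [dotProduct, Pi.star_apply, Complex.normSq_eq_conj_mul_self, Complex.star_def]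
  set QL : ℂ := star v ⬝ᵥ (L.map Complex.ofReal *ᵥ v) with hQLdef
  set QB : ℂ := star v ⬝ᵥ (A *ᵥ v) with hQBdef
  set QD : ℂ := star v ⬝ᵥ (D.map Complex.ofReal *ᵥ v) with hQDdef
  -- main scalar identity
  have heq : (S : ℂ) + (c : ℂ) * QL = z * QB := by
    have := congrArg (fun w => star v ⬝ᵥ w) h1
    simpa [hmapadd, Matrix.add_mulVec, Matrix.smul_mulVec, dotProduct_add,
      dotProduct_smul, Matrix.one_mulVec, hdotself, smul_eq_mul, hQLdef, hQBdef] using this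
  -- QB is real
  have hQBconj : (starRingEnd ℂ) QB = QB := by
    rw [hQBdef, hAdef, SpecAux.conj_quad, hB.eq]
  have hQBim : QB.im = 0 := Complex.conj_eq_iff_im.mp hQBconj
  -- real part of the identity
  have hSum : S + c * QL.re = 0 := by
    have := congrArg Complex.re heq
    simpa [Complex.add_re, Complex.mul_re, Complex.ofReal_re, Complex.ofReal_im, hre,
      hQBim] using this
  -- L + Lᵀ = B - D
  have hLLT : L + Lᵀ = B - D := by
    ext i j
    have hs : B j i = B i j := hB.apply i j
    simp only [hLdef, hDdef, lowerBlockPart, Matrix.add_apply, Matrix.transpose_apply,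
      Matrix.sub_apply, Matrix.of_apply]
    rcases lt_trichotomy (blk i) (blk j) with h | h | h
    · simp [not_lt_of_gt h, h, h.ne, hs]
    · simp [h, lt_irrefl]
    · simp [h, not_lt_of_gt h, h.ne', hs]
  -- 2 QL.re = QB.re - QD.re
  have hQL2 : 2 * QL.re = QB.re - QD.re := by
    have hconj : QL + (starRingEnd ℂ) QL = QB - QD := by
      rw [hQLdef, SpecAux.conj_quad]
      have hmap2 : (L.map Complex.ofReal) + ((Lᵀ).map Complex.ofReal)
          = B.map Complex.ofReal - D.map Complex.ofReal := by
        ext i j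
        have := congrFun (congrFun hLLT i) j
        simp only [Matrix.add_apply, Matrix.sub_apply, Matrix.map_apply] at this ⊢
        exact_mod_cast this
      rw [hQBdef, hQDdef, hAdef, ← dotProduct_sub, ← Matrix.sub_mulVec, ← hmap2,
        Matrix.add_mulVec, dotProduct_add]
    have hre2 := congrArg Complex.re hconj
    simp only [Complex.add_re, Complex.sub_re, Complex.conj_re] at hre2
    linarith
  -- bounds
  have hQBbound : |QB.re| ≤ ρ * S := by
    calc |QB.re| ≤ ‖QB‖ := Complex.abs_re_le_norm QB
      _ ≤ ρ * S := SpecAux.quad_bound hAH heig v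
  have hQDbound : |QD.re| ≤ ρ * S := by
    have hdecomp : QD = ∑ s, star (fun i => if blk i = s then v i else 0) ⬝ᵥ
        (B.map Complex.ofReal *ᵥ (fun i => if blk i = s then v i else 0)) := by
      rw [hQDdef, hDdef, SpecAux.sum_blocks_quad]
    have hSsum : ∑ s, (∑ i, Complex.normSq (if blk i = s then v i else 0)) = S := by
      rw [hSdef, Finset.sum_comm]
      refine Finset.sum_congr rfl fun i _ => ?_
      simp [apply_ite Complex.normSq, Finset.sum_ite_eq]
    calc |QD.re| ≤ ‖QD‖ := Complex.abs_re_le_norm QD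
      _ ≤ ∑ s, ‖star (fun i => if blk i = s then v i else 0) ⬝ᵥ
            (B.map Complex.ofReal *ᵥ (fun i => if blk i = s then v i else 0))‖ := by
          rw [hdecomp]; exact norm_sum_le _ _
      _ ≤ ∑ s, ρ * (∑ i, Complex.normSq (if blk i = s then v i else 0)) :=
          Finset.sum_le_sum fun s _ => SpecAux.quad_bound hAH heig _
      _ = ρ * S := by rw [← Finset.mul_sum, hSsum]
  have hQLbound : |QL.re| ≤ ρ * S := by
    have h2 : |2 * QL.re| ≤ |QB.re| + |QD.re| := by
      rw [hQL2]; exact abs_sub _ _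
    rw [abs_mul] at h2
    simp only [abs_two] at h2
    linarith
  -- final contradiction
  have h1' : -(ρ * S) ≤ QL.re := (abs_le.mp hQLbound).1
  nlinarith [mul_le_mul_of_nonneg_left h1' hc0, mul_nonneg (le_of_lt hρpos) (le_of_lt hS0),
    mul_le_mul_of_nonneg_right hcβ (mul_nonneg (le_of_lt hρpos) (le_of_lt hS0))]

end
end
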